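/- arXiv:1706.04935 — 4 statements merged into one kernel-verified Lean document; each statement's English description precedes it below -/
import Mathlib

section
/- Let D ⊆ [n]² be a diagram with columns D_j = {i : (i,j) ∈ D}, let j ∈ [n], and let I ⊆ [n]. Then θ_D^j(I) = r_j(I), where r_j is the rank function of the Schubert matroid SM_n(D_j); that is, the number of paired ()'s in word_{j,I}(D) plus the number of ⋆'s in word_{j,I}(D) equals max{ #(I ∩ B) : B ≤ D_j }. -/
open Finset

/-- `DomLE R S`: `R` and `S` have the same cardinality and, for each `k`, the `k`-th least
element of `R` does not exceed the `k`-th least element of `S`.  The bases of the Schubert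
matroid `SM_n(S)` are exactly the `B` with `DomLE B S`. -/
def DomLE {α : Type*} [LinearOrder α] (R S : Finset α) : Prop :=
  R.card = S.card ∧
    ∀ (k : ℕ) (hR : k < (R.sort (· ≤ ·)).length) (hS : k < (S.sort (· ≤ ·)).length),
      (R.sort (· ≤ ·)).get ⟨k, hR⟩ ≤ (S.sort (· ≤ ·)).get ⟨k, hS⟩

/-- Auxiliary greedy matching count for a parenthesis word (`true` = '(', `false` = ')'),
given the current number of unmatched open parentheses. -/
def matchedPairsAux : List Bool → ℕ → ℕ
  | [], _ => 0
  | true :: rest, o => matchedPairsAux rest (o + 1)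
  | false :: rest, 0 => matchedPairsAux rest 0
  | false :: rest, o + 1 => matchedPairsAux rest o + 1

/-- The number of paired `()`'s in a parenthesis word (`true` = '(', `false` = ')'). -/
def matchedPairs (w : List Bool) : ℕ := matchedPairsAux w 0

/-- Column `j` of a diagram `D ⊆ [n]²`: the set `D_j = {i : (i,j) ∈ D}`. -/
def colSet {n : ℕ} (D : Finset (Fin n × Fin n)) (j : Fin n) : Finset (Fin n) :=
  Finset.univ.filter fun i => (i, j) ∈ D

/-- The parenthesis part of `word_{j,I}(D)`: reading rows `i` from top to bottom, record
'(' (= `true`) if `(i,j) ∉ D` and `i ∈ I`, and ')' (= `false`) if `(i,j) ∈ D` and `i ∉ I`.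
(The `⋆`'s, at positions with `(i,j) ∈ D` and `i ∈ I`, play no role in the matching.) -/
def colWord {n : ℕ} (D : Finset (Fin n × Fin n)) (j : Fin n) (I : Finset (Fin n)) :
    List Bool :=
  (List.finRange n).filterMap fun i =>
    if (i, j) ∈ D then (if i ∈ I then none else some false)
    else (if i ∈ I then some true else none)

/-- `θ_D^j(I)`: the number of paired `()`'s plus the number of `⋆`'s in `word_{j,I}(D)`. -/
def thetaCol {n : ℕ} (D : Finset (Fin n × Fin n)) (j : Fin n) (I : Finset (Fin n)) : ℕ :=
  matchedPairs (colWord D j I) + (colSet D j ∩ I).card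

/-- `θ_D(I) = Σ_{j=1}^n θ_D^j(I)`. -/
def theta {n : ℕ} (D : Finset (Fin n × Fin n)) (I : Finset (Fin n)) : ℕ :=
  ∑ j : Fin n, thetaCol D j I

/-- Rank function of the Schubert matroid `SM_n(S)`: `r(I) = max{#(I ∩ B) : B a basis}`. -/
noncomputable def smRank {n : ℕ} (S I : Finset (Fin n)) : ℕ :=
  letI := Classical.decPred fun B : Finset (Fin n) => DomLE B S
  ((Finset.univ : Finset (Finset (Fin n))).filter fun B => DomLE B S).sup
    fun B => (I ∩ B).card

/-- Max prefix deficiency (closes minus opens), computed from the head. -/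
def defic : List Bool → ℕ
  | [] => 0
  | true :: w => defic w - 1
  | false :: w => defic w + 1

lemma defic_le_count (w : List Bool) : defic w ≤ w.count false := by
  induction w with
  | nil => simp [defic]
  | cons b w ih =>
    cases b <;> simp [defic, List.count_cons] <;> omega

lemma matchedPairsAux_eq (w : List Bool) : ∀ o : ℕ,
    matchedPairsAux w o = w.count false - (defic w - o) := by
  induction w with
  | nil => intro o; simp [matchedPairsAux, defic]
  | cons b w ih =>
    intro o
    have hle := defic_le_count w
    cases b with
    | true =>
      rw [matchedPairsAux, ih]
      simp [defic, List.count_cons]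
      all_goals omega
    | false =>
      cases o with
      | zero =>
        rw [matchedPairsAux, ih]
        simp [defic, List.count_cons]
        all_goals omega
      | succ o =>
        rw [matchedPairsAux, ih]
        simp [defic, List.count_cons]
        all_goals omega

lemma matchedPairs_eq (w : List Bool) : matchedPairs w = w.count false - defic w := by
  rw [matchedPairs, matchedPairsAux_eq]; omega

lemma defic_split (w : List Bool) : ∃ p q : List Bool, w = p ++ q ∧
    p.count true ≤ p.count false ∧ defic w = p.count false - p.count true := by
  induction w with
  | nil => exact ⟨[], [], rfl, le_refl _, rfl⟩
  | cons b w ih =>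
    obtain ⟨p, q, hw, hle, hd⟩ := ih
    cases b with
    | true =>
      by_cases h0 : defic w = 0
      · exact ⟨[], true :: w, rfl, le_refl _, by simp [defic, h0]⟩
      · refine ⟨true :: p, q, by rw [hw]; simp, ?_, ?_⟩ <;>
          simp [defic, List.count_cons] <;> omega
    | false =>
      refine ⟨false :: p, q, by rw [hw]; simp, ?_, ?_⟩ <;>
        simp [defic, List.count_cons] <;> omega

-- count over filterMap
lemma count_filterMap {α : Type*} (c : α → Option Bool) (l : List α) (b : Bool) :
    (l.filterMap c).count b = l.countP (fun x => c x = some b) := by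
  induction l with
  | nil => simp
  | cons x l ih =>
    rw [List.filterMap_cons]
    cases h : c x with
    | none => rw [ih, List.countP_cons]; simp [h]
    | some b' =>
      rw [List.count_cons, ih, List.countP_cons]
      by_cases hb : b' = b <;> simp [h, hb]

-- prefix lifting through filterMap
lemma prefix_filterMap {α β : Type*} (c : α → Option β) :
    ∀ (l : List α) (p : List β), p <+: l.filterMap c →
      ∃ u v : List α, l = u ++ v ∧ p = u.filterMap c := by
  intro l
  induction l with
  | nil => intro p hp; simp at hp; exact ⟨[], [], rfl, by simp [hp]⟩
  | cons x l ih =>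
    intro p hp
    rw [List.filterMap_cons] at hp
    cases h : c x with
    | none =>
      rw [h] at hp
      obtain ⟨u, v, hl, hu⟩ := ih p hp
      exact ⟨x :: u, v, by rw [hl]; simp, by rw [List.filterMap_cons, h, hu]⟩
    | some b =>
      rw [h] at hp
      rcases p with _ | ⟨b', p'⟩
      · exact ⟨[], x :: l, rfl, rfl⟩
      · obtain ⟨hb, hp'⟩ : b' = b ∧ p' <+: l.filterMap c := by
          obtain ⟨t, ht⟩ := hp
          simp at ht
          exact ⟨ht.1, ⟨t, ht.2⟩⟩
        obtain ⟨u, v, hl, hu⟩ := ih p' hp'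
        exact ⟨x :: u, v, by rw [hl]; simp, by rw [List.filterMap_cons, h, hu, hb]⟩

-- membership in a prefix of finRange
lemma mem_prefix_finRange {n : ℕ} (u v : List (Fin n)) (h : List.finRange n = u ++ v)
    (i : Fin n) : i ∈ u ↔ (i : ℕ) < u.length := by
  have hlen : u.length ≤ n := by
    have := congrArg List.length h
    simp [List.length_append] at this
    omega
  constructor
  · intro hi
    have hidx : u.idxOf i < u.length := List.idxOf_lt_length_iff.mpr hi
    have h1 : (u ++ v)[u.idxOf i]'(by simp only [List.length_append]; omega)
        = u[u.idxOf i] := List.getElem_append_left _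
    have h2 : u[u.idxOf i] = i := List.getElem_idxOf hidx
    have h3 : (List.finRange n)[u.idxOf i]'(by
        simp only [List.length_finRange]; omega) = i :=
      (List.getElem_of_eq h _).trans (h1.trans h2)
    rw [List.getElem_finRange] at h3
    have h4 := congrArg Fin.val h3
    simp at h4
    omega
  · intro hi
    have h1 : (u ++ v)[(i : ℕ)]'(by simp only [List.length_append]; omega)
        = u[(i : ℕ)] := List.getElem_append_left _
    have h3 : (List.finRange n)[(i : ℕ)]'(by
        simp only [List.length_finRange]; omega) = u[(i : ℕ)] :=
      (List.getElem_of_eq h _).trans h1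
    rw [List.getElem_finRange] at h3
    have h4 : u[(i : ℕ)] = i := by
      rw [← h3]
      ext
      simp
    rw [← h4]
    exact List.getElem_mem hi

-- countP to card of filter over univ
lemma countP_eq_card {n : ℕ} {u : List (Fin n)} (hu : u.Nodup) (q : Fin n → Prop)
    [DecidablePred q] (hq : ∀ i, i ∈ u ↔ q i) (p : Fin n → Bool) :
    u.countP p = (Finset.univ.filter fun i => q i ∧ p i).card := by
  rw [List.countP_eq_length_filter]
  rw [← List.toFinset_card_of_nodup (hu.filter p)]
  congr 1
  ext i
  simp [List.mem_filter, hq]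

-- countP of a list as card over its index type
lemma countP_eq_card_index {α : Type*} (l : List α) (p : α → Bool) :
    l.countP p = (Finset.univ.filter fun k : Fin l.length => p (l[(k : ℕ)])).card := by
  induction l with
  | nil => simp
  | cons x l ih =>
    rw [List.countP_cons, ih, Finset.card_filter, Finset.card_filter]
    have hs := Fin.sum_univ_succ (n := l.length)
      (f := fun i : Fin (l.length + 1) => if p ((x :: l)[(i : ℕ)]) then (1 : ℕ) else 0)
    rw [show (∑ i ∈ Finset.univ, if p ((x :: l)[((i : Fin (x :: l).length) : ℕ)]) then (1:ℕ) else 0)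
        = ∑ i : Fin (l.length + 1), (if p ((x :: l)[(i : ℕ)]) then (1:ℕ) else 0) from rfl, hs]
    simp only [List.getElem_cons_zero, List.getElem_cons_succ, Fin.val_succ, Fin.val_zero]
    exact Nat.add_comm _ _

-- card of filtered finset via sorted list indices
lemma card_filter_eq_index {n : ℕ} (A : Finset (Fin n)) (p : Fin n → Bool) :
    (A.filter fun i => p i).card
      = (Finset.univ.filter fun k : Fin (A.sort (· ≤ ·)).length
          => p ((A.sort (· ≤ ·))[(k : ℕ)])).card := by
  rw [← countP_eq_card_index]
  rw [List.countP_eq_length_filter, ← List.toFinset_card_of_nodup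
    ((A.sort_nodup (· ≤ ·)).filter p)]
  congr 1
  ext i
  simp [List.mem_filter, Finset.mem_sort]


-- helper: fill for card_filter_eq_index'
section Helpers
variable {n : ℕ}

lemma card_univ_filter_congr (P Q : Fin n → Prop) [DecidablePred P] [DecidablePred Q]
    (h : ∀ i, P i ↔ Q i) :
    (Finset.univ.filter P).card = (Finset.univ.filter Q).card := by
  rw [Finset.filter_congr (fun x _ => h x)]

lemma card_univ_split (P R : Fin n → Prop) [DecidablePred P] [DecidablePred R] :
    (Finset.univ.filter P).card
      = (Finset.univ.filter fun i => P i ∧ R i).card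
        + (Finset.univ.filter fun i => P i ∧ ¬ R i).card := by
  have h := Finset.card_filter_add_card_filter_not
    (s := Finset.univ.filter P) (p := R)
  rw [Finset.filter_filter, Finset.filter_filter] at h
  omega

lemma countP_finRange (p : Fin n → Bool) :
    (List.finRange n).countP p = (Finset.univ.filter fun i => p i).card := by
  have := countP_eq_card (List.nodup_finRange n) (fun _ => True)
    (by simp [List.mem_finRange]) p
  simpa using this

end Helpers

lemma card_filter_eq_index' {n : ℕ} (A : Finset (Fin n)) (p : Fin n → Prop)
    [DecidablePred p] :
    (A.filter p).card
      = (Finset.univ.filter fun k : Fin (A.sort (· ≤ ·)).length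
          => p ((A.sort (· ≤ ·)).get k)).card := by
  have h1 : (A.filter p).card = ((A.sort (· ≤ ·)).filter fun x => decide (p x)).length := by
    rw [← List.toFinset_card_of_nodup ((Finset.sort_nodup A (· ≤ ·)).filter _)]
    congr 1
    ext i
    simp [List.mem_filter, Finset.mem_sort]
  rw [h1, ← List.countP_eq_length_filter, countP_eq_card_index]
  apply congrArg
  apply Finset.filter_congr
  intro k _
  simp [List.get_eq_getElem]

lemma domLE_atLeast {n : ℕ} {B S : Finset (Fin n)} (h : DomLE B S) (t : ℕ) :
    (B.filter fun i : Fin n => ¬ (i : ℕ) < t).card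
      ≤ (S.filter fun i : Fin n => ¬ (i : ℕ) < t).card := by
  obtain ⟨hcard, hdom⟩ := h
  rw [card_filter_eq_index' B, card_filter_eq_index' S]
  have hlen : (B.sort (· ≤ ·)).length = (S.sort (· ≤ ·)).length := by
    rw [Finset.length_sort, Finset.length_sort, hcard]
  apply Finset.card_le_card_of_injOn (fun k => Fin.cast hlen k)
  · intro k hk
    simp only [Finset.mem_coe, Finset.mem_filter, Finset.mem_univ, true_and] at hk ⊢
    have h2 := hdom (k : ℕ) k.isLt (by rw [← hlen]; exact k.isLt)
    have hval : ((B.sort (· ≤ ·)).get k : ℕ)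
        ≤ ((S.sort (· ≤ ·)).get (Fin.cast hlen k) : ℕ) := h2
    omega
  · intro a _ b _ hab
    simpa [Fin.ext_iff] using hab

lemma domLE_of_below {n : ℕ} {B S : Finset (Fin n)} (hcard : B.card = S.card)
    (h : ∀ t : ℕ, (S.filter fun i : Fin n => (i : ℕ) < t).card ≤ (B.filter fun i : Fin n => (i : ℕ) < t).card) :
    DomLE B S := by
  refine ⟨hcard, ?_⟩
  intro k hR hS
  set s : Fin n := (S.sort (· ≤ ·)).get ⟨k, hS⟩ with hs
  by_contra hcon
  push_neg at hcon
  have hsortS := Finset.pairwise_sort S (· ≤ ·)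
  have hsortB := Finset.pairwise_sort B (· ≤ ·)
  -- step 1 : k+1 ≤ #(S.filter (·.val < s+1))
  have step1 : k + 1 ≤ (S.filter fun i : Fin n => (i : ℕ) < (s : ℕ) + 1).card := by
    rw [card_filter_eq_index' S]
    have hsub : Finset.Iic (⟨k, hS⟩ : Fin (S.sort (· ≤ ·)).length)
        ⊆ Finset.univ.filter fun idx => ((S.sort (· ≤ ·)).get idx : ℕ) < (s : ℕ) + 1 := by
      intro idx hidx
      rw [Finset.mem_Iic] at hidx
      simp only [Finset.mem_filter, Finset.mem_univ, true_and]
      have : (S.sort (· ≤ ·)).get idx ≤ s := hsortS.rel_get_of_le hidx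
      omega
    have := Finset.card_le_card hsub
    rwa [Fin.card_Iic] at this
  have step2 := le_trans step1 (h ((s : ℕ) + 1))
  rw [card_filter_eq_index' B] at step2
  have hsub2 : (Finset.univ.filter fun idx : Fin (B.sort (· ≤ ·)).length
      => ((B.sort (· ≤ ·)).get idx : ℕ) < (s : ℕ) + 1)
      ⊆ Finset.Iio (⟨k, hR⟩ : Fin (B.sort (· ≤ ·)).length) := by
    intro idx hidx
    simp only [Finset.mem_filter, Finset.mem_univ, true_and] at hidx
    rw [Finset.mem_Iio]
    by_contra hge
    push_neg at hge
    have : (B.sort (· ≤ ·)).get ⟨k, hR⟩ ≤ (B.sort (· ≤ ·)).get idx :=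
      hsortB.rel_get_of_le hge
    have : s < (B.sort (· ≤ ·)).get idx := lt_of_lt_of_le hcon this
    omega
  have := Finset.card_le_card hsub2
  rw [Fin.card_Iio] at this
  have hkk : ((⟨k, hR⟩ : Fin (B.sort (· ≤ ·)).length) : ℕ) = k := rfl
  omega

/-- Greedy matching: returns the list of matched (open, close) pairs. -/
def matchAux {α : Type*} (c : α → Option Bool) : List α → List α → List (α × α)
  | [], _ => []
  | x :: rest, stk =>
    match c x with
    | none => matchAux c rest stk
    | some true => matchAux c rest (x :: stk)
    | some false =>
      match stk with
      | [] => matchAux c rest []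
      | y :: stk' => (y, x) :: matchAux c rest stk'

lemma matchAux_length {α : Type*} (c : α → Option Bool) :
    ∀ (l stk : List α),
      (matchAux c l stk).length = matchedPairsAux (l.filterMap c) stk.length := by
  intro l
  induction l with
  | nil => intro stk; simp [matchAux, List.filterMap_nil, matchedPairsAux]
  | cons x rest ih =>
    intro stk
    rw [List.filterMap_cons]
    cases hc : c x with
    | none => simp only [matchAux, hc]; exact ih stk
    | some b =>
      cases b with
      | true =>
        simp only [matchAux, hc]
        simp only [matchedPairsAux]
        have := ih (x :: stk)
        simpa using this
      | false =>
        cases stk with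
        | nil => simp only [matchAux, hc, matchedPairsAux]; exact ih []
        | cons y stk' =>
          simp only [matchAux, hc]
          rw [List.length_cons, List.length_cons]; simp only [matchedPairsAux]
          simpa using ih stk'

lemma matchAux_spec {α : Type*} [LinearOrder α] (c : α → Option Bool) :
    ∀ (l stk : List α), l.Pairwise (· < ·) → stk.Nodup →
      (∀ y ∈ stk, c y = some true) → (∀ y ∈ stk, ∀ x ∈ l, y < x) →
      (∀ p ∈ matchAux c l stk, p.1 < p.2 ∧ c p.1 = some true ∧ c p.2 = some false) ∧
      ((matchAux c l stk).map Prod.fst).Nodup ∧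
      ((matchAux c l stk).map Prod.snd).Nodup ∧
      (∀ p ∈ matchAux c l stk, p.1 ∈ stk ∨ p.1 ∈ l) ∧
      (∀ p ∈ matchAux c l stk, p.2 ∈ l) := by
  intro l
  induction l with
  | nil => intro stk _ _ _ _; simp [matchAux]
  | cons x rest ih =>
    intro stk hsort hnd hstk hlt
    have hsort' : rest.Pairwise (· < ·) := hsort.of_cons
    have hxlt : ∀ z ∈ rest, x < z := fun z hz => List.rel_of_pairwise_cons hsort hz
    cases hc : c x with
    | none =>
      simp only [matchAux, hc]
      have h := ih stk hsort' hnd hstk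
        (fun y hy z hz => hlt y hy z (List.mem_cons_of_mem _ hz))
      refine ⟨h.1, h.2.1, h.2.2.1, ?_, ?_⟩
      · intro p hp
        rcases h.2.2.2.1 p hp with h' | h'
        · exact Or.inl h'
        · exact Or.inr (List.mem_cons_of_mem _ h')
      · intro p hp
        exact List.mem_cons_of_mem _ (h.2.2.2.2 p hp)
    | some b =>
      cases b with
      | true =>
        simp only [matchAux, hc]
        have hnd' : (x :: stk).Nodup := by
          rw [List.nodup_cons]
          exact ⟨fun hx => lt_irrefl x (hlt x hx x (List.mem_cons_self)), hnd⟩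
        have hstk' : ∀ y ∈ x :: stk, c y = some true := by
          intro y hy
          rcases List.mem_cons.mp hy with rfl | hy'
          · exact hc
          · exact hstk y hy'
        have hlt' : ∀ y ∈ x :: stk, ∀ z ∈ rest, y < z := by
          intro y hy z hz
          rcases List.mem_cons.mp hy with rfl | hy'
          · exact hxlt z hz
          · exact hlt y hy' z (List.mem_cons_of_mem _ hz)
        have h := ih (x :: stk) hsort' hnd' hstk' hlt'
        refine ⟨h.1, h.2.1, h.2.2.1, ?_, ?_⟩
        · intro p hp
          rcases h.2.2.2.1 p hp with h' | h'
          · rcases List.mem_cons.mp h' with rfl | h''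
            · exact Or.inr (List.mem_cons_self)
            · exact Or.inl h''
          · exact Or.inr (List.mem_cons_of_mem _ h')
        · intro p hp
          exact List.mem_cons_of_mem _ (h.2.2.2.2 p hp)
      | false =>
        cases stk with
        | nil =>
          simp only [matchAux, hc]
          have h := ih [] hsort' List.nodup_nil (by simp) (by simp)
          refine ⟨h.1, h.2.1, h.2.2.1, ?_, ?_⟩
          · intro p hp
            rcases h.2.2.2.1 p hp with h' | h'
            · exact absurd h' (List.not_mem_nil)
            · exact Or.inr (List.mem_cons_of_mem _ h')
          · intro p hp
            exact List.mem_cons_of_mem _ (h.2.2.2.2 p hp)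
        | cons y stk' =>
          simp only [matchAux, hc]
          have hnd' : stk'.Nodup := (List.nodup_cons.mp hnd).2
          have hynotstk' : y ∉ stk' := (List.nodup_cons.mp hnd).1
          have hstk' : ∀ z ∈ stk', c z = some true :=
            fun z hz => hstk z (List.mem_cons_of_mem _ hz)
          have hlt' : ∀ z ∈ stk', ∀ w ∈ rest, z < w :=
            fun z hz w hw => hlt z (List.mem_cons_of_mem _ hz) w (List.mem_cons_of_mem _ hw)
          have h := ih stk' hsort' hnd' hstk' hlt'
          have hyx : y < x := hlt y (List.mem_cons_self) x (List.mem_cons_self)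
          constructor
          · intro p hp
            rcases List.mem_cons.mp hp with rfl | hp'
            · exact ⟨hyx, hstk y (List.mem_cons_self), hc⟩
            · exact h.1 p hp'
          constructor
          · -- firsts nodup : y not among firsts of recursive call
            rw [List.map_cons, List.nodup_cons]
            constructor
            · intro hy
              obtain ⟨p, hp, hpy⟩ := List.mem_map.mp hy
              rcases h.2.2.2.1 p hp with h' | h'
              · exact hynotstk' (by rw [show y = p.1 from hpy.symm]; exact h')
              · have := hlt y (List.mem_cons_self) p.1 (List.mem_cons_of_mem _ h')
                rw [hpy] at this
                exact lt_irrefl y this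
            · exact h.2.1
          constructor
          · -- seconds nodup : x not among seconds of recursive call
            rw [List.map_cons, List.nodup_cons]
            constructor
            · intro hx
              obtain ⟨p, hp, hpx⟩ := List.mem_map.mp hx
              have := hxlt p.2 (h.2.2.2.2 p hp)
              rw [hpx] at this
              exact lt_irrefl x this
            · exact h.2.2.1
          constructor
          · intro p hp
            rcases List.mem_cons.mp hp with rfl | hp'
            · exact Or.inl (List.mem_cons_self)
            · rcases h.2.2.2.1 p hp' with h' | h'
              · exact Or.inl (List.mem_cons_of_mem _ h')
              · exact Or.inr (List.mem_cons_of_mem _ h')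
          · intro p hp
            rcases List.mem_cons.mp hp with rfl | hp'
            · exact List.mem_cons_self
            · exact List.mem_cons_of_mem _ (h.2.2.2.2 p hp')


section Main
variable {n : ℕ} (D : Finset (Fin n × Fin n)) (j : Fin n) (I : Finset (Fin n))

/-- The classifier underlying `colWord`. -/
def colFun : Fin n → Option Bool := fun i =>
  if (i, j) ∈ D then (if i ∈ I then none else some false)
  else (if i ∈ I then some true else none)

lemma colWord_eq : colWord D j I = (List.finRange n).filterMap (colFun D j I) := rfl

lemma mem_colSet_iff (i : Fin n) : i ∈ colSet D j ↔ (i, j) ∈ D := by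
  simp [colSet]

lemma colFun_true_iff (i : Fin n) :
    colFun D j I i = some true ↔ (i ∉ colSet D j ∧ i ∈ I) := by
  rw [mem_colSet_iff]
  unfold colFun
  split_ifs with h1 h2 <;> simp_all

lemma colFun_false_iff (i : Fin n) :
    colFun D j I i = some false ↔ (i ∈ colSet D j ∧ i ∉ I) := by
  rw [mem_colSet_iff]
  unfold colFun
  split_ifs with h1 h2 <;> simp_all

/-- Part 1: `θ` equals the cut value at some threshold `t`. -/
lemma thetaCol_eq_cut : ∃ t : ℕ,
    thetaCol D j I = (I.filter fun i : Fin n => (i : ℕ) < t).card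
      + ((colSet D j).filter fun i : Fin n => ¬ (i : ℕ) < t).card := by
  classical
  obtain ⟨p, q, hw, hct, hd⟩ := defic_split (colWord D j I)
  have hpre : p <+: (List.finRange n).filterMap (colFun D j I) :=
    ⟨q, by rw [← colWord_eq, ← hw]⟩
  obtain ⟨u, v, huv, hpu⟩ := prefix_filterMap (colFun D j I) (List.finRange n) p hpre
  refine ⟨u.length, ?_⟩
  set t := u.length with ht
  have hu_nodup : u.Nodup :=
    (List.nodup_finRange n).sublist (List.IsPrefix.sublist ⟨v, huv.symm⟩)
  have hmem : ∀ i : Fin n, i ∈ u ↔ (i : ℕ) < t := mem_prefix_finRange u v huv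
  set S := colSet D j with hS
  -- the five atomic counts
  set N1 := (Finset.univ.filter fun i : Fin n => (i ∈ S ∧ i ∈ I) ∧ (i : ℕ) < t).card with hN1
  set N2 := (Finset.univ.filter fun i : Fin n => (i ∈ S ∧ i ∈ I) ∧ ¬ (i : ℕ) < t).card with hN2
  set N3 := (Finset.univ.filter fun i : Fin n => (i ∈ S ∧ i ∉ I) ∧ (i : ℕ) < t).card with hN3
  set N4 := (Finset.univ.filter fun i : Fin n => (i ∈ S ∧ i ∉ I) ∧ ¬ (i : ℕ) < t).card with hN4
  set N5 := (Finset.univ.filter fun i : Fin n => (i ∉ S ∧ i ∈ I) ∧ (i : ℕ) < t).card with hN5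
  -- counts of the prefix p
  have f1 : p.count false = N3 := by
    rw [hpu, count_filterMap, countP_eq_card hu_nodup _ hmem, hN3]
    apply card_univ_filter_congr
    intro i
    simp only [decide_eq_true_eq, colFun_false_iff]
    tauto
  have f2 : p.count true = N5 := by
    rw [hpu, count_filterMap, countP_eq_card hu_nodup _ hmem, hN5]
    apply card_univ_filter_congr
    intro i
    simp only [decide_eq_true_eq, colFun_true_iff]
    tauto
  have f3 : (colWord D j I).count false = N3 + N4 := by
    rw [colWord_eq, count_filterMap, countP_finRange]
    rw [card_univ_filter_congr _ (fun i : Fin n => i ∈ S ∧ i ∉ I)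
      (by intro i; simp only [decide_eq_true_eq, colFun_false_iff]; try tauto)]
    rw [hN3, hN4]
    exact card_univ_split _ _
  have f4 : (colSet D j ∩ I).card = N1 + N2 := by
    have he : colSet D j ∩ I = Finset.univ.filter fun i : Fin n => i ∈ S ∧ i ∈ I := by
      ext i; simp [hS]
    rw [he, hN1, hN2]
    exact card_univ_split _ _
  have f5 : (I.filter fun i : Fin n => (i : ℕ) < t).card = N1 + N5 := by
    have he : (I.filter fun i : Fin n => (i : ℕ) < t)
        = Finset.univ.filter fun i : Fin n => i ∈ I ∧ (i : ℕ) < t := by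
      ext i; simp
    have hsplit := card_univ_split (fun i : Fin n => i ∈ I ∧ (i : ℕ) < t)
      (fun i => i ∈ S)
    have e1 : (Finset.univ.filter fun i : Fin n => (i ∈ I ∧ (i : ℕ) < t) ∧ i ∈ S).card
        = N1 := by
      rw [hN1]; apply card_univ_filter_congr; intro i; tauto
    have e2 : (Finset.univ.filter fun i : Fin n => (i ∈ I ∧ (i : ℕ) < t) ∧ ¬ i ∈ S).card
        = N5 := by
      rw [hN5]; apply card_univ_filter_congr; intro i; tauto
    rw [he]
    omega
  have f6 : ((colSet D j).filter fun i : Fin n => ¬ (i : ℕ) < t).card = N2 + N4 := by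
    have he : ((colSet D j).filter fun i : Fin n => ¬ (i : ℕ) < t)
        = Finset.univ.filter fun i : Fin n => i ∈ S ∧ ¬ (i : ℕ) < t := by
      ext i; simp [hS]
    have hsplit := card_univ_split (fun i : Fin n => i ∈ S ∧ ¬ (i : ℕ) < t)
      (fun i => i ∈ I)
    have e1 : (Finset.univ.filter fun i : Fin n => (i ∈ S ∧ ¬ (i : ℕ) < t) ∧ i ∈ I).card
        = N2 := by
      rw [hN2]; apply card_univ_filter_congr; intro i; tauto
    have e2 : (Finset.univ.filter fun i : Fin n => (i ∈ S ∧ ¬ (i : ℕ) < t) ∧ ¬ i ∈ I).card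
        = N4 := by
      rw [hN4]; apply card_univ_filter_congr; intro i; tauto
    rw [he]
    omega
  have hmp2 := matchedPairs_eq (colWord D j I)
  have hcw : List.count false (colWord D j I)
      = List.count false p + List.count false q := by
    rw [hw, List.count_append]
  have hd2 : defic (colWord D j I) = List.count false p - List.count true p := hd
  have hθ : thetaCol D j I = matchedPairs (colWord D j I) + (colSet D j ∩ I).card := rfl
  show thetaCol D j I = (I.filter fun i : Fin n => (i : ℕ) < t).card
    + ((colSet D j).filter fun i : Fin n => ¬ (i : ℕ) < t).card
  rw [hθ]
  omega

/-- Part 2: any basis bound. -/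
lemma cut_ge_basis (t : ℕ) (B : Finset (Fin n)) (hdom : DomLE B (colSet D j)) :
    (I ∩ B).card ≤ (I.filter fun i : Fin n => (i : ℕ) < t).card
      + ((colSet D j).filter fun i : Fin n => ¬ (i : ℕ) < t).card := by
  classical
  have hsplit := Finset.card_filter_add_card_filter_not
    (s := I ∩ B) (p := fun i : Fin n => (i : ℕ) < t)
  have h1 : ((I ∩ B).filter fun i : Fin n => (i : ℕ) < t).card
      ≤ (I.filter fun i : Fin n => (i : ℕ) < t).card :=
    Finset.card_le_card (Finset.filter_subset_filter _ Finset.inter_subset_left)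
  have h2 : ((I ∩ B).filter fun i : Fin n => ¬ (i : ℕ) < t).card
      ≤ (B.filter fun i : Fin n => ¬ (i : ℕ) < t).card :=
    Finset.card_le_card (Finset.filter_subset_filter _ Finset.inter_subset_right)
  have h3 := domLE_atLeast hdom t
  omega

end Main

/-- For a diagram `D ⊆ [n]²`, a column index `j` and `I ⊆ [n]`:
`θ_D^j(I) = r_j(I)`, i.e. the number of paired `()`'s plus the number of `⋆`'s in
`word_{j,I}(D)` equals `max{#(I ∩ B) : B ≤ D_j}`, the rank of `I` in `SM_n(D_j)`. -/
theorem stmt2 (n : ℕ) (D : Finset (Fin n × Fin n)) (j : Fin n) (I : Finset (Fin n)) :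
    thetaCol D j I = smRank (colSet D j) I := by
  classical
  apply le_antisymm
  · -- lower bound: build the optimal basis from the greedy matching
    set M := matchAux (colFun D j I) (List.finRange n) [] with hM
    obtain ⟨hpair, hFnd, hCnd, hfst, hsnd⟩ := matchAux_spec (colFun D j I)
      (List.finRange n) [] (List.pairwise_lt_finRange n) List.nodup_nil
      (by simp) (by simp)
    have hMlen : M.length = matchedPairs (colWord D j I) := by
      rw [hM, matchAux_length]
      rfl
    set F := (M.map Prod.fst).toFinset with hF
    set C := (M.map Prod.snd).toFinset with hC
    have hFcard : F.card = M.length := by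
      rw [hF, List.toFinset_card_of_nodup hFnd, List.length_map]
    have hCcard : C.card = M.length := by
      rw [hC, List.toFinset_card_of_nodup hCnd, List.length_map]
    have hFmem : ∀ a ∈ F, a ∉ colSet D j ∧ a ∈ I := by
      intro a ha
      rw [hF, List.mem_toFinset] at ha
      obtain ⟨pr, hpr, rfl⟩ := List.mem_map.mp ha
      exact (colFun_true_iff D j I _).mp (hpair pr hpr).2.1
    have hCmem : ∀ a ∈ C, a ∈ colSet D j ∧ a ∉ I := by
      intro a ha
      rw [hC, List.mem_toFinset] at ha
      obtain ⟨pr, hpr, rfl⟩ := List.mem_map.mp ha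
      exact (colFun_false_iff D j I _).mp (hpair pr hpr).2.2
    have hCsubSI : C ⊆ colSet D j \ I := by
      intro a ha
      rw [Finset.mem_sdiff]
      exact hCmem a ha
    set B₀ := F ∪ ((colSet D j ∩ I) ∪ ((colSet D j \ I) \ C)) with hB₀
    have hcfw : (colWord D j I).count false = (colSet D j \ I).card := by
      rw [colWord_eq, count_filterMap, countP_finRange]
      rw [card_univ_filter_congr _ (fun i : Fin n => i ∈ colSet D j ∧ i ∉ I)
        (by intro i; simp only [decide_eq_true_eq, colFun_false_iff])]
      congr 1
      ext i
      simp [Finset.mem_sdiff]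
    have hmple : matchedPairs (colWord D j I) ≤ (colSet D j \ I).card := by
      rw [← hcfw, matchedPairs_eq]
      omega
    have hSsplit : (colSet D j ∩ I).card + (colSet D j \ I).card = (colSet D j).card :=
      Finset.card_inter_add_card_sdiff _ _
    have hd1 : Disjoint F ((colSet D j ∩ I) ∪ ((colSet D j \ I) \ C)) := by
      rw [Finset.disjoint_left]
      intro a haF haU
      rcases Finset.mem_union.mp haU with h | h
      · exact (hFmem a haF).1 (Finset.mem_inter.mp h).1
      · exact (hFmem a haF).1 (Finset.mem_sdiff.mp (Finset.mem_sdiff.mp h).1).1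
    have hd2 : Disjoint (colSet D j ∩ I) ((colSet D j \ I) \ C) := by
      rw [Finset.disjoint_left]
      intro a h1 h2
      exact (Finset.mem_sdiff.mp (Finset.mem_sdiff.mp h2).1).2 (Finset.mem_inter.mp h1).2
    have hcard1 : B₀.card
        = F.card + ((colSet D j ∩ I).card + ((colSet D j \ I) \ C).card) := by
      rw [hB₀, Finset.card_union_of_disjoint hd1, Finset.card_union_of_disjoint hd2]
    have hsd : ((colSet D j \ I) \ C).card = (colSet D j \ I).card - C.card :=
      Finset.card_sdiff_of_subset hCsubSI
    have hB₀card : B₀.card = (colSet D j).card := by omega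
    -- suffix condition
    have hsuffix : ∀ t' : ℕ,
        (B₀.filter fun i : Fin n => ¬ (i : ℕ) < t').card
          ≤ ((colSet D j).filter fun i : Fin n => ¬ (i : ℕ) < t').card := by
      intro t'
      set P := fun i : Fin n => ¬ (i : ℕ) < t' with hP
      have hFfilter : (F.filter P).card = M.countP ((fun a => decide (P a)) ∘ Prod.fst) := by
        have he : F.filter P = ((M.map Prod.fst).filter (fun a => decide (P a))).toFinset := by
          ext a
          simp [hF, List.mem_filter, hP]
        rw [he, List.toFinset_card_of_nodup (hFnd.filter _),
          ← List.countP_eq_length_filter, List.countP_map]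
      have hCfilter : (C.filter P).card = M.countP ((fun a => decide (P a)) ∘ Prod.snd) := by
        have he : C.filter P = ((M.map Prod.snd).filter (fun a => decide (P a))).toFinset := by
          ext a
          simp [hC, List.mem_filter, hP]
        rw [he, List.toFinset_card_of_nodup (hCnd.filter _),
          ← List.countP_eq_length_filter, List.countP_map]
      have ha1 : M.countP ((fun a => decide (P a)) ∘ Prod.fst)
          ≤ M.countP ((fun a => decide (P a)) ∘ Prod.snd) := by
        apply List.countP_mono_left
        intro pr hpr hp
        have hlt : (pr.1 : Fin n) < pr.2 := (hpair pr hpr).1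
        have hv : (pr.1 : ℕ) < (pr.2 : ℕ) := hlt
        simp only [Function.comp, decide_eq_true_eq, hP] at hp ⊢
        omega
      have ha2 : (C.filter P).card ≤ ((colSet D j \ I).filter P).card :=
        Finset.card_le_card (Finset.filter_subset_filter _ hCsubSI)
      have ha3' : C.filter P ⊆ (colSet D j \ I).filter P :=
        Finset.filter_subset_filter _ hCsubSI
      have ha3 : (((colSet D j \ I) \ C).filter P)
          = ((colSet D j \ I).filter P) \ (C.filter P) := by
        ext a
        simp only [Finset.mem_sdiff, Finset.mem_filter]
        tauto
      have ha3c : (((colSet D j \ I) \ C).filter P).card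
          = ((colSet D j \ I).filter P).card - (C.filter P).card := by
        rw [ha3, Finset.card_sdiff_of_subset ha3']
      have ha4 : ((colSet D j ∩ I).filter P).card + ((colSet D j \ I).filter P).card
          = ((colSet D j).filter P).card := by
        have hbase := Finset.card_inter_add_card_sdiff ((colSet D j).filter P) I
        have e1 : ((colSet D j).filter P) ∩ I = (colSet D j ∩ I).filter P := by
          ext a
          simp only [Finset.mem_inter, Finset.mem_filter]
          tauto
        have e2 : ((colSet D j).filter P) \ I = (colSet D j \ I).filter P := by
          ext a
          simp only [Finset.mem_sdiff, Finset.mem_filter]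
          tauto
        rw [e1, e2] at hbase
        exact hbase
      have hunion : B₀.filter P
          = (F.filter P) ∪ (((colSet D j ∩ I).filter P)
            ∪ ((((colSet D j \ I) \ C)).filter P)) := by
        rw [hB₀, Finset.filter_union, Finset.filter_union]
      have hle : (B₀.filter P).card ≤ (F.filter P).card
          + (((colSet D j ∩ I).filter P).card
            + ((((colSet D j \ I) \ C)).filter P).card) := by
        rw [hunion]
        refine le_trans (Finset.card_union_le _ _) ?_
        exact Nat.add_le_add_left (Finset.card_union_le _ _) _
      have e4 : B₀.filter (fun i : Fin n => ¬ (i : ℕ) < t') = B₀.filter P :=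
        Finset.filter_congr (fun x _ => by simp [hP])
      have e5 : (colSet D j).filter (fun i : Fin n => ¬ (i : ℕ) < t')
          = (colSet D j).filter P :=
        Finset.filter_congr (fun x _ => by simp [hP])
      rw [e4, e5]
      omega
    have hdomB₀ : DomLE B₀ (colSet D j) := by
      apply domLE_of_below hB₀card
      intro t'
      have h1 := hsuffix t'
      have h2 := Finset.card_filter_add_card_filter_not (s := B₀)
        (p := fun i : Fin n => (i : ℕ) < t')
      have h3 := Finset.card_filter_add_card_filter_not (s := colSet D j)
        (p := fun i : Fin n => (i : ℕ) < t')
      omega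
    have hsub : F ∪ (colSet D j ∩ I) ⊆ I ∩ B₀ := by
      intro a ha
      rcases Finset.mem_union.mp ha with h | h
      · exact Finset.mem_inter.mpr ⟨(hFmem a h).2,
          by rw [hB₀]; exact Finset.mem_union_left _ h⟩
      · exact Finset.mem_inter.mpr ⟨(Finset.mem_inter.mp h).2,
          by rw [hB₀]; exact Finset.mem_union_right _ (Finset.mem_union_left _ h)⟩
    have hdisj : Disjoint F (colSet D j ∩ I) :=
      Finset.disjoint_left.mpr fun a haF haI =>
        (hFmem a haF).1 (Finset.mem_inter.mp haI).1
    have hcardsub : (F ∪ (colSet D j ∩ I)).card = F.card + (colSet D j ∩ I).card :=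
      Finset.card_union_of_disjoint hdisj
    have hθle : thetaCol D j I ≤ (I ∩ B₀).card := by
      have hcc := Finset.card_le_card hsub
      have hθ : thetaCol D j I = matchedPairs (colWord D j I) + (colSet D j ∩ I).card := rfl
      omega
    refine le_trans hθle ?_
    unfold smRank
    refine Finset.le_sup (f := fun B => (I ∩ B).card) ?_
    rw [Finset.mem_filter]
    exact ⟨Finset.mem_univ _, hdomB₀⟩
  · -- upper bound
    obtain ⟨t, hθt⟩ := thetaCol_eq_cut D j I
    rw [hθt]
    unfold smRank
    apply Finset.sup_le
    intro B hB
    rw [Finset.mem_filter] at hB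
    exact cut_ge_basis D j I t B hB.2
end

section
/- Let D = (D_1, ..., D_n) with each D_j ⊆ [n]. For a tuple C = (C_1, ..., C_n) of subsets of [n], write C ≤ D if C_j ≤ D_j for all j, and define ξ^C ∈ ℤ^n by ξ^C_i = #{ j : i ∈ C_j }. Then the set of lattice points of the Minkowski sum Σ_{j=1}^n P(SM_n(D_j)) is exactly { ξ^C : C ≤ D }. -/
open Finset Pointwise

/-- Indicator vector `ζ^B ∈ {0,1}^n ⊆ ℝ^n` of a subset `B ⊆ [n]`. -/
def indVec {n : ℕ} (B : Finset (Fin n)) : Fin n → ℝ := fun i => if i ∈ B then 1 else 0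

/-- Matroid polytope `P(SM_n(S))` of the Schubert matroid `SM_n(S)`: the convex hull in
`ℝ^n` of the indicator vectors of its bases, i.e. of the `B` with `B ≤ S`. -/
def smPolytope {n : ℕ} (S : Finset (Fin n)) : Set (Fin n → ℝ) :=
  convexHull ℝ {x | ∃ B : Finset (Fin n), DomLE B S ∧ x = indVec B}

namespace Stmt5Aux

open scoped Classical

variable {n : ℕ}

/-- suffix count: number of elements with value `≥ t`. -/
def sc (R : Finset (Fin n)) (t : ℕ) : ℕ := (R.filter fun i : Fin n => t ≤ (i : ℕ)).card

lemma sc_zero (R : Finset (Fin n)) : sc R 0 = R.card := by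
  simp [sc]

lemma sc_mono {I J : Finset (Fin n)} (h : I ⊆ J) (t : ℕ) : sc I t ≤ sc J t :=
  card_le_card (filter_subset_filter _ h)

lemma sc_eq_zero (R : Finset (Fin n)) (t : ℕ) (ht : n ≤ t) : sc R t = 0 := by
  rw [sc, card_eq_zero, filter_eq_empty_iff]
  intro i _
  have := i.isLt
  omega

lemma sc_insert {x : Fin n} {R : Finset (Fin n)} (hx : x ∉ R) (t : ℕ) :
    sc (insert x R) t = sc R t + if t ≤ (x : ℕ) then 1 else 0 := by
  rw [sc, filter_insert]
  split_ifs with h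
  · rw [card_insert_of_notMem (fun hc => hx (mem_filter.1 hc).1)]
    rfl
  · simp [sc]

lemma sc_erase {x : Fin n} {R : Finset (Fin n)} (hx : x ∈ R) (t : ℕ) :
    sc (R.erase x) t + (if t ≤ (x : ℕ) then 1 else 0) = sc R t := by
  conv_rhs => rw [← insert_erase hx]
  rw [sc_insert (notMem_erase x R)]

lemma pc_add_sc (R : Finset (Fin n)) (t : ℕ) :
    (R.filter fun i : Fin n => (i : ℕ) < t).card + sc R t = R.card := by
  rw [sc]
  have h : (R.filter fun i : Fin n => t ≤ (i : ℕ)) = R.filter fun i : Fin n => ¬ (i : ℕ) < t := by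
    apply filter_congr
    intro i _
    constructor <;> omega
  rw [h, card_filter_add_card_filter_not]

def Ind (D I : Finset (Fin n)) : Prop := ∀ t, sc I t ≤ sc D t

lemma Ind.card_le {D I : Finset (Fin n)} (h : Ind D I) : I.card ≤ D.card := by
  have := h 0
  rwa [sc_zero, sc_zero] at this

lemma Ind.subset {D I J : Finset (Fin n)} (hIJ : I ⊆ J) (hJ : Ind D J) : Ind D I :=
  fun t => (sc_mono hIJ t).trans (hJ t)

lemma Ind.refl (D : Finset (Fin n)) : Ind D D := fun _ => le_rfl

/-- Bases of the Schubert matroid of `D` with forbidden set `X`. -/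
def IsB (D X B : Finset (Fin n)) : Prop := B.card = D.card ∧ Ind D B ∧ B ∩ X = ∅

lemma disj_iff {S X : Finset (Fin n)} : S ∩ X = ∅ ↔ ∀ a ∈ S, a ∉ X := by
  simp [Finset.eq_empty_iff_forall_notMem, mem_inter]

lemma augment {D I J : Finset (Fin n)} (hI : Ind D I) (hJ : Ind D J)
    (hcard : I.card < J.card) : ∃ x, x ∈ J ∧ x ∉ I ∧ Ind D (insert x I) := by
  have hex : ∃ t, sc I t = sc D t :=
    ⟨n, by rw [sc_eq_zero I n le_rfl, sc_eq_zero D n le_rfl]⟩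
  have htight : sc I (Nat.find hex) = sc D (Nat.find hex) := Nat.find_spec hex
  set t0 := Nat.find hex with ht0
  have hlt : ∀ t < t0, sc I t < sc D t := fun t ht =>
    lt_of_le_of_ne (hI t) (Nat.find_min hex ht)
  have hIc := pc_add_sc I t0
  have hJc := pc_add_sc J t0
  have hJt0 := hJ t0
  have hJI : (I.filter fun i : Fin n => (i : ℕ) < t0).card < (J.filter fun i : Fin n => (i : ℕ) < t0).card := by
    omega
  have : ¬ ((J.filter fun i : Fin n => (i : ℕ) < t0) ⊆ (I.filter fun i : Fin n => (i : ℕ) < t0)) := by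
    intro hsub
    exact absurd (card_le_card hsub) (by omega)
  obtain ⟨x, hxJ, hxI⟩ := Finset.not_subset.1 this
  obtain ⟨hxJ', hxt0⟩ := mem_filter.1 hxJ
  have hxI' : x ∉ I := fun h => hxI (mem_filter.2 ⟨h, hxt0⟩)
  refine ⟨x, hxJ', hxI', ?_⟩
  intro t
  rw [sc_insert hxI']
  split_ifs with h
  · have : t < t0 := by omega
    have := hlt t this
    omega
  · simpa using hI t

lemma extend {D X B₀ : Finset (Fin n)} (hB₀ : IsB D X B₀) :
    ∀ (k : ℕ) (I : Finset (Fin n)), D.card - I.card = k → Ind D I → I ∩ X = ∅ →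
    ∃ B, IsB D X B ∧ I ⊆ B ∧ B ⊆ I ∪ B₀ := by
  intro k
  induction k with
  | zero =>
    intro I hk hI hIX
    have hle := hI.card_le
    have : I.card = D.card := by omega
    exact ⟨I, ⟨this, hI, hIX⟩, Finset.Subset.refl _, subset_union_left⟩
  | succ k ihk =>
    intro I hk hI hIX
    have hle := hI.card_le
    have hlt : I.card < B₀.card := by rw [hB₀.1]; omega
    obtain ⟨x, hxB₀, hxI, hInd⟩ := augment hI hB₀.2.1 hlt
    have hX : (insert x I) ∩ X = ∅ := by
      rw [disj_iff]
      intro a ha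
      rcases mem_insert.1 ha with rfl | ha'
      · exact (disj_iff.1 hB₀.2.2) a hxB₀
      · exact (disj_iff.1 hIX) a ha'
    obtain ⟨B, hB, hsub, hsub2⟩ := ihk (insert x I)
      (by rw [card_insert_of_notMem hxI]; omega) hInd hX
    refine ⟨B, hB, (subset_insert x I).trans hsub, hsub2.trans ?_⟩
    intro a ha
    rcases mem_union.1 ha with ha' | ha'
    · rcases mem_insert.1 ha' with rfl | h
      · exact mem_union_right _ hxB₀
      · exact mem_union_left _ h
    · exact mem_union_right _ ha'

/-- The finset of all bases. -/
noncomputable def bset (D X : Finset (Fin n)) : Finset (Finset (Fin n)) :=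
  (univ : Finset (Finset (Fin n))).filter (fun B => IsB D X B)

lemma mem_bset {D X B : Finset (Fin n)} : B ∈ bset D X ↔ IsB D X B := by
  simp [bset]

/-- Rank function of the Schubert matroid with forbidden set. -/
noncomputable def rho (D X A : Finset (Fin n)) : ℕ :=
  (bset D X).sup fun B => (B ∩ A).card

lemma le_rho {D X B : Finset (Fin n)} (hB : IsB D X B) (A : Finset (Fin n)) :
    (B ∩ A).card ≤ rho D X A :=
  Finset.le_sup (f := fun B => (B ∩ A).card) (mem_bset.2 hB)

lemma rho_exists {D X : Finset (Fin n)} (hNE : ∃ B, IsB D X B) (A : Finset (Fin n)) :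
    ∃ B, IsB D X B ∧ (B ∩ A).card = rho D X A := by
  obtain ⟨B₀, hB₀⟩ := hNE
  obtain ⟨B, hB, hBe⟩ := Finset.exists_mem_eq_sup (bset D X) ⟨B₀, mem_bset.2 hB₀⟩
    (fun B => (B ∩ A).card)
  exact ⟨B, mem_bset.1 hB, hBe.symm⟩

lemma rho_mono {D X : Finset (Fin n)} {A A' : Finset (Fin n)} (h : A ⊆ A') :
    rho D X A ≤ rho D X A' :=
  Finset.sup_mono_fun fun B _ => card_le_card (inter_subset_inter (Finset.Subset.refl _) h)

lemma rho_empty (D X : Finset (Fin n)) : rho D X ∅ = 0 :=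
  le_antisymm (Finset.sup_le fun B _ => by simp) (Nat.zero_le _)

lemma rho_le_card (D X A : Finset (Fin n)) : rho D X A ≤ D.card :=
  Finset.sup_le fun B hB => (card_le_card inter_subset_left).trans (mem_bset.1 hB).1.le

lemma rho_univ {D X : Finset (Fin n)} (hNE : ∃ B, IsB D X B) : rho D X univ = D.card := by
  refine le_antisymm (rho_le_card _ _ _) ?_
  obtain ⟨B, hB⟩ := hNE
  calc D.card = (B ∩ univ).card := by rw [inter_univ, hB.1]
    _ ≤ rho D X univ := le_rho hB univ

lemma rho_insert_le (D X A : Finset (Fin n)) (x : Fin n) :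
    rho D X (insert x A) ≤ rho D X A + 1 := by
  apply Finset.sup_le
  intro B hB
  have hsub : B ∩ insert x A ⊆ insert x (B ∩ A) := by
    intro a ha
    rw [mem_inter, mem_insert] at ha
    rcases ha.2 with rfl | h
    · exact mem_insert_self _ _
    · exact mem_insert_of_mem (mem_inter.2 ⟨ha.1, h⟩)
  calc (B ∩ insert x A).card ≤ (insert x (B ∩ A)).card := card_le_card hsub
    _ ≤ (B ∩ A).card + 1 := card_insert_le _ _
    _ ≤ rho D X A + 1 := by
        have := le_rho (mem_bset.1 hB) A
        omega

lemma rho_submod {D X : Finset (Fin n)} (hNE : ∃ B, IsB D X B) (A A' : Finset (Fin n)) :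
    rho D X (A ∪ A') + rho D X (A ∩ A') ≤ rho D X A + rho D X A' := by
  obtain ⟨B₁, hB₁, hB₁c⟩ := rho_exists hNE (A ∩ A')
  set I := B₁ ∩ (A ∩ A') with hIdef
  set P := (bset D X).filter (fun B => I ⊆ B) with hPdef
  have hPne : P.Nonempty := ⟨B₁, by
    rw [hPdef, mem_filter]
    exact ⟨mem_bset.2 hB₁, inter_subset_left⟩⟩
  obtain ⟨Bs, hBsP, hBsmax⟩ := Finset.exists_mem_eq_sup P hPne (fun B => (B ∩ (A ∪ A')).card)
  have hBsb : IsB D X Bs ∧ I ⊆ Bs := by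
    have := mem_filter.1 hBsP
    exact ⟨mem_bset.1 this.1, this.2⟩
  have hIA : I ⊆ A ∩ A' := inter_subset_right
  have hclaim : (Bs ∩ (A ∪ A')).card = rho D X (A ∪ A') := by
    refine le_antisymm (le_rho hBsb.1 _) ?_
    by_contra hcon
    push_neg at hcon
    obtain ⟨B₂, hB₂, hB₂c⟩ := rho_exists hNE (A ∪ A')
    have hcard : (Bs ∩ (A ∪ A')).card < (B₂ ∩ (A ∪ A')).card := by rw [hB₂c]; exact hcon
    obtain ⟨x, hxJ, hxS, hInd⟩ := augment (Ind.subset inter_subset_left hBsb.1.2.1)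
      (Ind.subset inter_subset_left hB₂.2.1) hcard
    obtain ⟨hxB₂, hxZ⟩ := mem_inter.1 hxJ
    have hxBs : x ∉ Bs := fun h => hxS (mem_inter.2 ⟨h, hxZ⟩)
    have hXx : (insert x (Bs ∩ (A ∪ A'))) ∩ X = ∅ := by
      rw [disj_iff]
      intro a ha
      rcases mem_insert.1 ha with rfl | ha'
      · exact (disj_iff.1 hB₂.2.2) a hxB₂
      · exact (disj_iff.1 hBsb.1.2.2) a (mem_inter.1 ha').1
    obtain ⟨Bn, hBn, hBnsub, hBnsub2⟩ := extend hBsb.1 _ (insert x (Bs ∩ (A ∪ A'))) rfl hInd hXx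
    have hIS : I ⊆ Bs ∩ (A ∪ A') := by
      intro a ha
      exact mem_inter.2 ⟨hBsb.2 ha, mem_union_left _ (mem_inter.1 (hIA ha)).1⟩
    have hBnP : Bn ∈ P := by
      rw [hPdef, mem_filter]
      refine ⟨mem_bset.2 hBn, ?_⟩
      exact fun a ha => hBnsub (mem_insert_of_mem (hIS ha))
    have hlow : (Bs ∩ (A ∪ A')).card + 1 ≤ (Bn ∩ (A ∪ A')).card := by
      have hsub : insert x (Bs ∩ (A ∪ A')) ⊆ Bn ∩ (A ∪ A') := by
        intro a ha
        refine mem_inter.2 ⟨hBnsub ha, ?_⟩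
        rcases mem_insert.1 ha with rfl | ha'
        · exact hxZ
        · exact (mem_inter.1 ha').2
      calc (Bs ∩ (A ∪ A')).card + 1 = (insert x (Bs ∩ (A ∪ A'))).card :=
            (card_insert_of_notMem hxS).symm
        _ ≤ (Bn ∩ (A ∪ A')).card := card_le_card hsub
    have hhigh : (Bn ∩ (A ∪ A')).card ≤ (Bs ∩ (A ∪ A')).card := by
      calc (Bn ∩ (A ∪ A')).card ≤ P.sup (fun B => (B ∩ (A ∪ A')).card) :=
            Finset.le_sup (f := fun B => (B ∩ (A ∪ A')).card) hBnP
        _ = (Bs ∩ (A ∪ A')).card := hBsmax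
    omega
  have hmod : (Bs ∩ (A ∪ A')).card + (Bs ∩ (A ∩ A')).card = (Bs ∩ A).card + (Bs ∩ A').card := by
    have h1 : Bs ∩ (A ∪ A') = (Bs ∩ A) ∪ (Bs ∩ A') := inter_union_distrib_left _ _ _
    have h2 : Bs ∩ (A ∩ A') = (Bs ∩ A) ∩ (Bs ∩ A') := by
      ext a
      simp only [mem_inter]
      tauto
    rw [h1, h2, add_comm]
    exact card_inter_add_card_union _ _
  have hI_le : rho D X (A ∩ A') ≤ (Bs ∩ (A ∩ A')).card := by
    rw [← hB₁c]
    apply card_le_card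
    intro a ha
    exact mem_inter.2 ⟨hBsb.2 ha, (mem_inter.1 ha).2⟩
  have h3 := le_rho hBsb.1 A
  have h4 := le_rho hBsb.1 A'
  omega

lemma rho_insert_eq_of_subset {D X : Finset (Fin n)} (hNE : ∃ B, IsB D X B)
    {A A' : Finset (Fin n)} {x : Fin n} (hAA' : A ⊆ A')
    (h : rho D X (insert x A) = rho D X A) :
    rho D X (insert x A') = rho D X A' := by
  by_cases hx : x ∈ A'
  · rw [insert_eq_self.2 hx]
  · have hsub := rho_submod hNE (insert x A) A'
    have h1 : insert x A ∪ A' = insert x A' := by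
      rw [insert_union, union_eq_right.2 hAA']
    have h2 : insert x A ∩ A' = A ∩ A' := by
      ext a
      simp only [mem_inter, mem_insert]
      constructor
      · rintro ⟨rfl | ha, ha'⟩
        · exact absurd ha' hx
        · exact ⟨ha, ha'⟩
      · rintro ⟨ha, ha'⟩
        exact ⟨Or.inr ha, ha'⟩
    have h3 : A ∩ A' = A := inter_eq_left.2 hAA'
    rw [h1, h2, h3, h] at hsub
    have hmono : rho D X A' ≤ rho D X (insert x A') := rho_mono (subset_insert _ _)
    omega

section Contract

variable {D X : Finset (Fin n)} {x dstar : Fin n}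

lemma contract_base {B : Finset (Fin n)} (hB : IsB D X B) (hxB : x ∈ B)
    (hd : dstar ∈ D) (hxd : (x : ℕ) ≤ (dstar : ℕ))
    (hmin : ∀ d ∈ D, (x : ℕ) ≤ (d : ℕ) → (dstar : ℕ) ≤ (d : ℕ)) :
    IsB (D.erase dstar) (insert x X) (B.erase x) := by
  refine ⟨?_, ?_, ?_⟩
  · rw [card_erase_of_mem hxB, card_erase_of_mem hd, hB.1]
  · intro t
    have e1 := sc_erase hxB t
    have e2 := sc_erase hd t
    have hBD := hB.2.1 t
    by_cases h1 : t ≤ (x : ℕ)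
    · have h2 : t ≤ (dstar : ℕ) := le_trans h1 hxd
      rw [if_pos h1] at e1
      rw [if_pos h2] at e2
      omega
    · by_cases h2 : t ≤ (dstar : ℕ)
      · rw [if_neg h1] at e1
        rw [if_pos h2] at e2
        -- strict step: x < t ≤ dstar
        have key1 : sc B t + 1 ≤ sc B (x : ℕ) := by
          have hxf : x ∉ B.filter (fun i : Fin n => t ≤ (i : ℕ)) := by
            intro hc
            exact h1 (mem_filter.1 hc).2
          have hsub : insert x (B.filter fun i : Fin n => t ≤ (i : ℕ)) ⊆
              B.filter (fun i : Fin n => (x : ℕ) ≤ (i : ℕ)) := by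
            intro a ha
            rcases mem_insert.1 ha with rfl | ha'
            · exact mem_filter.2 ⟨hxB, le_rfl⟩
            · obtain ⟨haB, hat⟩ := mem_filter.1 ha'
              exact mem_filter.2 ⟨haB, by omega⟩
          calc sc B t + 1 = (insert x (B.filter fun i : Fin n => t ≤ (i : ℕ))).card :=
                (card_insert_of_notMem hxf).symm
            _ ≤ (B.filter fun i : Fin n => (x : ℕ) ≤ (i : ℕ)).card := card_le_card hsub
            _ = sc B (x : ℕ) := rfl
        have key2 : sc D (x : ℕ) = sc D t := by
          unfold sc
          congr 1
          apply filter_congr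
          intro d hdD
          constructor
          · intro hxle
            have := hmin d hdD hxle
            omega
          · intro htle
            omega
        have hBDx := hB.2.1 (x : ℕ)
        omega
      · rw [if_neg h1] at e1
        rw [if_neg h2] at e2
        omega
  · rw [disj_iff]
    intro a ha
    have haB := mem_of_mem_erase ha
    have hanex : a ≠ x := ne_of_mem_erase ha
    intro hc
    rcases mem_insert.1 hc with rfl | hc'
    · exact hanex rfl
    · exact (disj_iff.1 hB.2.2) a haB hc'

lemma expand_base {B' : Finset (Fin n)} (hd : dstar ∈ D)
    (hxd : (x : ℕ) ≤ (dstar : ℕ)) (hxX : x ∉ X)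
    (hB' : IsB (D.erase dstar) (insert x X) B') :
    x ∉ B' ∧ IsB D X (insert x B') := by
  have hxB' : x ∉ B' := fun h => (disj_iff.1 hB'.2.2) x h (mem_insert_self _ _)
  have hDpos : 0 < D.card := card_pos.2 ⟨dstar, hd⟩
  refine ⟨hxB', ?_, ?_, ?_⟩
  · rw [card_insert_of_notMem hxB', hB'.1, card_erase_of_mem hd]
    omega
  · intro t
    have e1 := sc_insert hxB' t
    have e2 := sc_erase hd t
    have hBD := hB'.2.1 t
    by_cases h1 : t ≤ (x : ℕ)
    · have h2 : t ≤ (dstar : ℕ) := le_trans h1 hxd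
      rw [if_pos h1] at e1
      rw [if_pos h2] at e2
      omega
    · rw [if_neg h1] at e1
      by_cases h2 : t ≤ (dstar : ℕ)
      · rw [if_pos h2] at e2
        omega
      · rw [if_neg h2] at e2
        omega
  · rw [disj_iff]
    intro a ha
    rcases mem_insert.1 ha with rfl | ha'
    · exact hxX
    · intro hc
      exact (disj_iff.1 hB'.2.2) a ha' (mem_insert_of_mem hc)

lemma rho_drop (hNE : ∃ B, IsB D X B) (hd : dstar ∈ D) (hxd : (x : ℕ) ≤ (dstar : ℕ))
    (hmin : ∀ d ∈ D, (x : ℕ) ≤ (d : ℕ) → (dstar : ℕ) ≤ (d : ℕ)) (A : Finset (Fin n)) :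
    rho D X A ≤ rho (D.erase dstar) (insert x X) A + 1 := by
  obtain ⟨B, hB, hBc⟩ := rho_exists hNE A
  by_cases hxB : x ∈ B
  · have h2 := contract_base hB hxB hd hxd hmin
    have h3 : (B ∩ A).card ≤ (B.erase x ∩ A).card + 1 := by
      have hsub : (B ∩ A).erase x ⊆ B.erase x ∩ A := by
        intro a ha
        have h4 := mem_of_mem_erase ha
        exact mem_inter.2 ⟨mem_erase.2 ⟨ne_of_mem_erase ha, (mem_inter.1 h4).1⟩,
          (mem_inter.1 h4).2⟩
      have h5 : (B ∩ A).card - 1 ≤ ((B ∩ A).erase x).card := by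
        rcases Finset.card_erase_le (a := x) (s := B ∩ A) with _
        by_cases hxBA : x ∈ B ∩ A
        · rw [card_erase_of_mem hxBA]
        · rw [erase_eq_of_notMem hxBA]
          omega
      have := card_le_card hsub
      omega
    calc rho D X A = (B ∩ A).card := hBc.symm
      _ ≤ (B.erase x ∩ A).card + 1 := h3
      _ ≤ rho (D.erase dstar) (insert x X) A + 1 := by
          have := le_rho h2 A
          omega
  · -- remove the largest element of B that is ≤ dstar
    have hyne : (B.filter fun b : Fin n => (b : ℕ) ≤ (dstar : ℕ)).Nonempty := by
      by_contra hcon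
      rw [not_nonempty_iff_eq_empty, filter_eq_empty_iff] at hcon
      have hscB : sc B ((dstar : ℕ) + 1) = B.card := by
        unfold sc
        rw [Finset.filter_true_of_mem]
        intro b hb
        have := hcon hb
        omega
      have hscD : sc D ((dstar : ℕ) + 1) + 1 ≤ D.card := by
        have hsub : D.filter (fun i : Fin n => (dstar : ℕ) + 1 ≤ (i : ℕ)) ⊆ D.erase dstar := by
          intro a ha
          obtain ⟨haD, hat⟩ := mem_filter.1 ha
          refine mem_erase.2 ⟨?_, haD⟩
          intro hc
          rw [hc] at hat
          omega
        have := card_le_card hsub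
        rw [card_erase_of_mem hd] at this
        have hDpos : 0 < D.card := card_pos.2 ⟨dstar, hd⟩
        unfold sc
        omega
      have hcard : B.card = D.card := hB.1
      have := hB.2.1 ((dstar : ℕ) + 1)
      omega
    set y := (B.filter fun b : Fin n => (b : ℕ) ≤ (dstar : ℕ)).max' hyne with hy
    have hyB : y ∈ B := (mem_filter.1 (max'_mem _ hyne)).1
    have hyd : (y : ℕ) ≤ (dstar : ℕ) := (mem_filter.1 (max'_mem _ hyne)).2
    have hymax : ∀ b ∈ B, (b : ℕ) ≤ (dstar : ℕ) → (b : ℕ) ≤ (y : ℕ) := by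
      intro b hb hbd
      have hle : b ≤ y := le_max' _ b (mem_filter.2 ⟨hb, hbd⟩)
      exact hle
    have hbase : IsB (D.erase dstar) (insert x X) (B.erase y) := by
      refine ⟨?_, ?_, ?_⟩
      · rw [card_erase_of_mem hyB, card_erase_of_mem hd, hB.1]
      · intro t
        have e1 := sc_erase hyB t
        have e2 := sc_erase hd t
        have hBD := hB.2.1 t
        by_cases h1 : t ≤ (y : ℕ)
        · have h2 : t ≤ (dstar : ℕ) := le_trans h1 hyd
          rw [if_pos h1] at e1
          rw [if_pos h2] at e2
          omega
        · by_cases h2 : t ≤ (dstar : ℕ)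
          · rw [if_neg h1] at e1
            rw [if_pos h2] at e2
            have key1 : sc B t = sc B ((dstar : ℕ) + 1) := by
              unfold sc
              congr 1
              apply filter_congr
              intro b hb
              constructor
              · intro htb
                by_cases hbd : (b : ℕ) ≤ (dstar : ℕ)
                · have := hymax b hb hbd
                  omega
                · omega
              · intro hdb
                omega
            have key2 : sc D ((dstar : ℕ) + 1) + 1 ≤ sc D t := by
              have hdn : dstar ∉ D.filter (fun i : Fin n => (dstar : ℕ) + 1 ≤ (i : ℕ)) := by
                intro hc
                have := (mem_filter.1 hc).2
                omega
              have hsub : insert dstar (D.filter fun i : Fin n => (dstar : ℕ) + 1 ≤ (i : ℕ)) ⊆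
                  D.filter (fun i : Fin n => t ≤ (i : ℕ)) := by
                intro a ha
                rcases mem_insert.1 ha with rfl | ha'
                · exact mem_filter.2 ⟨hd, h2⟩
                · obtain ⟨haD, hat⟩ := mem_filter.1 ha'
                  exact mem_filter.2 ⟨haD, by omega⟩
              have := card_le_card hsub
              rw [card_insert_of_notMem hdn] at this
              exact this
            have hBD2 := hB.2.1 ((dstar : ℕ) + 1)
            omega
          · rw [if_neg h1] at e1
            rw [if_neg h2] at e2
            omega
      · rw [disj_iff]
        intro a ha
        have haB := mem_of_mem_erase ha
        intro hc
        rcases mem_insert.1 hc with rfl | hc'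
        · exact hxB haB
        · exact (disj_iff.1 hB.2.2) a haB hc'
    have h3 : (B ∩ A).card ≤ (B.erase y ∩ A).card + 1 := by
      have hsub : (B ∩ A).erase y ⊆ B.erase y ∩ A := by
        intro a ha
        have h4 := mem_of_mem_erase ha
        exact mem_inter.2 ⟨mem_erase.2 ⟨ne_of_mem_erase ha, (mem_inter.1 h4).1⟩,
          (mem_inter.1 h4).2⟩
      have h5 : (B ∩ A).card - 1 ≤ ((B ∩ A).erase y).card := by
        by_cases hyBA : y ∈ B ∩ A
        · rw [card_erase_of_mem hyBA]
        · rw [erase_eq_of_notMem hyBA]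
          omega
      have := card_le_card hsub
      omega
    calc rho D X A = (B ∩ A).card := hBc.symm
      _ ≤ (B.erase y ∩ A).card + 1 := h3
      _ ≤ rho (D.erase dstar) (insert x X) A + 1 := by
          have := le_rho hbase A
          omega

lemma rho_jump (hNE : ∃ B, IsB D X B) (hd : dstar ∈ D) (hxd : (x : ℕ) ≤ (dstar : ℕ))
    (hmin : ∀ d ∈ D, (x : ℕ) ≤ (d : ℕ) → (dstar : ℕ) ≤ (d : ℕ)) {A : Finset (Fin n)}
    (hxA : x ∉ A) (hjump : rho D X A < rho D X (insert x A)) :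
    rho D X A ≤ rho (D.erase dstar) (insert x X) A := by
  obtain ⟨B₁, hB₁, hc₁⟩ := rho_exists hNE A
  obtain ⟨B₂, hB₂, hc₂⟩ := rho_exists hNE (insert x A)
  have hIJ : (B₁ ∩ A).card < (B₂ ∩ insert x A).card := by
    rw [hc₁, hc₂]
    exact hjump
  obtain ⟨z, hzJ, hzI, hInd⟩ := augment (Ind.subset inter_subset_left hB₁.2.1)
    (Ind.subset inter_subset_left hB₂.2.1) hIJ
  obtain ⟨hzB₂, hzxA⟩ := mem_inter.1 hzJ
  have hzx : z = x := by
    by_contra hne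
    have hzA : z ∈ A := by
      rcases mem_insert.1 hzxA with h | h
      · exact absurd h hne
      · exact h
    have hXzI : (insert z (B₁ ∩ A)) ∩ X = ∅ := by
      rw [disj_iff]
      intro a ha
      rcases mem_insert.1 ha with rfl | ha'
      · exact (disj_iff.1 hB₂.2.2) a hzB₂
      · exact (disj_iff.1 hB₁.2.2) a (mem_inter.1 ha').1
    obtain ⟨B₃, hB₃, hsub, _⟩ := extend hB₁ _ (insert z (B₁ ∩ A)) rfl hInd hXzI
    have hsub2 : insert z (B₁ ∩ A) ⊆ B₃ ∩ A := by
      intro a ha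
      refine mem_inter.2 ⟨hsub ha, ?_⟩
      rcases mem_insert.1 ha with rfl | ha'
      · exact hzA
      · exact (mem_inter.1 ha').2
    have hcard : rho D X A + 1 ≤ (B₃ ∩ A).card := by
      have h1 : (insert z (B₁ ∩ A)).card = (B₁ ∩ A).card + 1 := card_insert_of_notMem hzI
      have h2 := card_le_card hsub2
      omega
    have := le_rho hB₃ A
    omega
  rw [hzx] at hInd hzI hzB₂
  have hXzI : (insert x (B₁ ∩ A)) ∩ X = ∅ := by
    rw [disj_iff]
    intro a ha
    rcases mem_insert.1 ha with rfl | ha'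
    · exact (disj_iff.1 hB₂.2.2) a hzB₂
    · exact (disj_iff.1 hB₁.2.2) a (mem_inter.1 ha').1
  obtain ⟨B₄, hB₄, hsub, _⟩ := extend hB₁ _ (insert x (B₁ ∩ A)) rfl hInd hXzI
  have hxB₄ : x ∈ B₄ := hsub (mem_insert_self _ _)
  have h5 := contract_base hB₄ hxB₄ hd hxd hmin
  have hsub3 : B₁ ∩ A ⊆ B₄.erase x ∩ A := by
    intro a ha
    obtain ⟨haB, haA⟩ := mem_inter.1 ha
    refine mem_inter.2 ⟨mem_erase.2 ⟨?_, hsub (mem_insert_of_mem ha)⟩, haA⟩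
    intro hc
    rw [hc] at haA
    exact hxA haA
  calc rho D X A = (B₁ ∩ A).card := hc₁.symm
    _ ≤ (B₄.erase x ∩ A).card := card_le_card hsub3
    _ ≤ rho (D.erase dstar) (insert x X) A := le_rho h5 A

end Contract

lemma main {m : ℕ} : ∀ (N : ℕ) (D X : Fin m → Finset (Fin n)) (q : Fin n → ℕ),
    (∑ i, q i = N) →
    (∀ j, ∃ B, IsB (D j) (X j) B) →
    (∀ A : Finset (Fin n), ∑ i ∈ A, q i ≤ ∑ j, rho (D j) (X j) A) →
    (∑ i, q i = ∑ j, (D j).card) →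
    ∃ C : Fin m → Finset (Fin n),
      (∀ j, IsB (D j) (X j) (C j)) ∧ ∀ i, q i = (univ.filter fun j => i ∈ C j).card := by
  intro N
  induction N with
  | zero =>
    intro D X q hN hne hineq heq
    have hq0 : ∀ i, q i = 0 := by
      intro i
      have := Finset.sum_eq_zero_iff.1 hN i (mem_univ i)
      exact this
    have hD0 : ∀ j, D j = ∅ := by
      intro j
      have h1 : ∑ j, (D j).card = 0 := by omega
      have := Finset.sum_eq_zero_iff.1 h1 j (mem_univ j)
      exact card_eq_zero.1 this
    refine ⟨fun _ => ∅, fun j => ⟨by rw [hD0 j], fun t => by simp [sc], empty_inter _⟩, ?_⟩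
    intro i
    rw [hq0 i]
    symm
    rw [card_eq_zero, filter_eq_empty_iff]
    intro j _
    exact notMem_empty i
  | succ N ihN =>
    intro D X q hN hne hineq heq
    have hx : ∃ x, 0 < q x := by
      by_contra hcon
      push_neg at hcon
      have : ∑ i, q i = 0 := Finset.sum_eq_zero fun i _ => by
        have := hcon i
        omega
      omega
    obtain ⟨x, hqx⟩ := hx
    set Tight : Finset (Fin n) → Prop :=
      fun A => ∑ i ∈ A, q i = ∑ j, rho (D j) (X j) A with hTdef
    have hTempty : Tight ∅ := by
      rw [hTdef]
      simp [rho_empty]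
    have hTunion : ∀ A A', Tight A → Tight A' → Tight (A ∪ A') := by
      intro A A' hA hA'
      have hsub : ∑ j, rho (D j) (X j) (A ∪ A') + ∑ j, rho (D j) (X j) (A ∩ A')
          ≤ ∑ j, rho (D j) (X j) A + ∑ j, rho (D j) (X j) A' := by
        rw [← Finset.sum_add_distrib, ← Finset.sum_add_distrib]
        exact Finset.sum_le_sum fun j _ => rho_submod (hne j) A A'
      have hmod : ∑ i ∈ (A ∪ A'), q i + ∑ i ∈ (A ∩ A'), q i
          = ∑ i ∈ A, q i + ∑ i ∈ A', q i := Finset.sum_union_inter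
      have h1 := hineq (A ∪ A')
      have h2 := hineq (A ∩ A')
      rw [hTdef] at hA hA' ⊢
      omega
    -- find a good row j0
    have hgood : ∃ j0, ∀ A, Tight A → x ∉ A →
        rho (D j0) (X j0) A < rho (D j0) (X j0) (insert x A) := by
      by_contra hcon
      push_neg at hcon
      choose A hA1 hA2 hA3 using hcon
      set Astar := univ.sup A with hAstar
      have hP : Tight Astar ∧ x ∉ Astar := by
        rw [hAstar]
        refine Finset.sup_induction (p := fun S => Tight S ∧ x ∉ S)
          ⟨by simpa [Finset.bot_eq_empty] using hTempty, by simp⟩ ?_ ?_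
        · rintro a1 ⟨ht1, hx1⟩ a2 ⟨ht2, hx2⟩
          refine ⟨hTunion _ _ ht1 ht2, ?_⟩
          rw [Finset.sup_eq_union, mem_union]
          rintro (h | h)
          · exact hx1 h
          · exact hx2 h
        · intro j _
          exact ⟨hA1 j, hA2 j⟩
      have hnoj : ∀ j, rho (D j) (X j) (insert x Astar) = rho (D j) (X j) Astar := by
        intro j
        have hAsub : A j ⊆ Astar := Finset.le_sup (mem_univ j)
        have heqj : rho (D j) (X j) (insert x (A j)) = rho (D j) (X j) (A j) :=
          le_antisymm (hA3 j) (rho_mono (subset_insert _ _))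
        exact rho_insert_eq_of_subset (hne j) hAsub heqj
      have h1 := hineq (insert x Astar)
      rw [Finset.sum_insert hP.2] at h1
      have h2 : ∑ j, rho (D j) (X j) (insert x Astar) = ∑ j, rho (D j) (X j) Astar :=
        Finset.sum_congr rfl fun j _ => hnoj j
      have h3 := hP.1
      rw [hTdef] at h3
      omega
    obtain ⟨j0, hj0⟩ := hgood
    -- x is in some basis of row j0
    have hjump0 := hj0 ∅ hTempty (notMem_empty x)
    rw [rho_empty] at hjump0
    obtain ⟨Bx, hBx, hBxc⟩ := rho_exists (hne j0) {x}
    have hxBx : x ∈ Bx := by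
      have hpos : 0 < (Bx ∩ {x}).card := by
        rw [hBxc]
        simpa using hjump0
      obtain ⟨a, ha⟩ := card_pos.1 hpos
      obtain ⟨haB, hax⟩ := mem_inter.1 ha
      rwa [mem_singleton.1 hax] at haB
    have hxX : x ∉ X j0 := (disj_iff.1 hBx.2.2) x hxBx
    -- dstar
    have hdne : ((D j0).filter fun d : Fin n => (x : ℕ) ≤ (d : ℕ)).Nonempty := by
      have h1 : 0 < sc Bx (x : ℕ) := card_pos.2 ⟨x, mem_filter.2 ⟨hxBx, le_rfl⟩⟩
      have h2 := hBx.2.1 (x : ℕ)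
      have h3 : 0 < sc (D j0) (x : ℕ) := by omega
      obtain ⟨d, hdm⟩ := card_pos.1 h3
      exact ⟨d, hdm⟩
    set dstar := ((D j0).filter fun d : Fin n => (x : ℕ) ≤ (d : ℕ)).min' hdne with hds
    have hd : dstar ∈ D j0 := (mem_filter.1 (min'_mem _ hdne)).1
    have hxd : (x : ℕ) ≤ (dstar : ℕ) := (mem_filter.1 (min'_mem _ hdne)).2
    have hmin : ∀ d ∈ D j0, (x : ℕ) ≤ (d : ℕ) → (dstar : ℕ) ≤ (d : ℕ) := by
      intro d hd1 hd2
      exact min'_le _ d (mem_filter.2 ⟨hd1, hd2⟩)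
    -- new data
    set D' := Function.update D j0 ((D j0).erase dstar) with hD'
    set X' := Function.update X j0 (insert x (X j0)) with hX'
    set q' := Function.update q x (q x - 1) with hq'
    have hq'x : q' x = q x - 1 := by rw [hq', Function.update_self]
    have hq'ne : ∀ i, i ≠ x → q' i = q i := by
      intro i hi
      rw [hq', Function.update_of_ne hi]
    have hq'sum : ∀ A : Finset (Fin n),
        ∑ i ∈ A, q' i = (∑ i ∈ A, q i) - (if x ∈ A then 1 else 0) := by
      intro A
      by_cases hxA : x ∈ A
      · rw [if_pos hxA]
        rw [← Finset.sum_erase_add A q' hxA, ← Finset.sum_erase_add A q hxA]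
        have h1 : ∑ i ∈ A.erase x, q' i = ∑ i ∈ A.erase x, q i :=
          Finset.sum_congr rfl fun i hi => hq'ne i (ne_of_mem_erase hi)
        rw [h1, hq'x]
        omega
      · rw [if_neg hxA]
        simp only [Nat.sub_zero]
        exact Finset.sum_congr rfl fun i hi => hq'ne i (by rintro rfl; exact hxA hi)
    have hsum_split : ∀ (f : Fin m → ℕ),
        ∑ j, f j = (∑ j ∈ univ.erase j0, f j) + f j0 :=
      fun f => (Finset.sum_erase_add _ _ (mem_univ j0)).symm
    have hrho'_split : ∀ A, ∑ j, rho (D' j) (X' j) A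
        = (∑ j ∈ univ.erase j0, rho (D j) (X j) A)
          + rho ((D j0).erase dstar) (insert x (X j0)) A := by
      intro A
      rw [hsum_split (fun j => rho (D' j) (X' j) A)]
      congr 1
      · apply Finset.sum_congr rfl
        intro j hj
        have hjne : j ≠ j0 := (mem_erase.1 hj).1
        rw [hD', hX', Function.update_of_ne hjne, Function.update_of_ne hjne]
      · rw [hD', hX', Function.update_self, Function.update_self]
    have hne' : ∀ j, ∃ B, IsB (D' j) (X' j) B := by
      intro j
      by_cases hj : j = j0
      · subst hj
        rw [hD', hX', Function.update_self, Function.update_self]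
        exact ⟨Bx.erase x, contract_base hBx hxBx hd hxd hmin⟩
      · rw [hD', hX', Function.update_of_ne hj, Function.update_of_ne hj]
        exact hne j
    have hdrop := rho_drop (hne j0) hd hxd hmin
    have hineq' : ∀ A : Finset (Fin n), ∑ i ∈ A, q' i ≤ ∑ j, rho (D' j) (X' j) A := by
      intro A
      rw [hq'sum A, hrho'_split A]
      have e2 := hsum_split (fun j => rho (D j) (X j) A)
      have hdropA := hdrop A
      by_cases hxA : x ∈ A
      · have h1 := hineq A
        rw [if_pos hxA]
        omega
      · rw [if_neg hxA]
        by_cases hT : Tight A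
        · have hjump := hj0 A hT hxA
          have hkeep := rho_jump (hne j0) hd hxd hmin hxA hjump
          rw [hTdef] at hT
          omega
        · have hlt : ∑ i ∈ A, q i < ∑ j, rho (D j) (X j) A :=
            lt_of_le_of_ne (hineq A) hT
          omega
    have hcard_split : ∑ j, (D' j).card
        = (∑ j ∈ univ.erase j0, (D j).card) + ((D j0).card - 1) := by
      rw [hsum_split (fun j => (D' j).card)]
      congr 1
      · apply Finset.sum_congr rfl
        intro j hj
        rw [hD', Function.update_of_ne (mem_erase.1 hj).1]
      · rw [hD', Function.update_self, card_erase_of_mem hd]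
    have hDj0pos : 0 < (D j0).card := card_pos.2 ⟨dstar, hd⟩
    have heq' : ∑ i, q' i = ∑ j, (D' j).card := by
      rw [hq'sum univ, if_pos (mem_univ x), hcard_split]
      have := hsum_split (fun j => (D j).card)
      omega
    have hN' : ∑ i, q' i = N := by
      rw [hq'sum univ, if_pos (mem_univ x)]
      omega
    obtain ⟨C', hC'B, hC'cnt⟩ := ihN D' X' q' hN' hne' hineq' heq'
    have hBj0 := hC'B j0
    rw [hD', hX', Function.update_self, Function.update_self] at hBj0
    obtain ⟨hxC', hIsB0⟩ := expand_base hd hxd hxX hBj0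
    set C := Function.update C' j0 (insert x (C' j0)) with hC
    refine ⟨C, ?_, ?_⟩
    · intro j
      by_cases hj : j = j0
      · subst hj
        rw [hC, Function.update_self]
        exact hIsB0
      · rw [hC, Function.update_of_ne hj]
        have := hC'B j
        rwa [hD', hX', Function.update_of_ne hj, Function.update_of_ne hj] at this
    · intro i
      have hcnt := hC'cnt i
      by_cases hix : i = x
      · subst hix
        have hfe : (univ.filter fun j => i ∈ C j)
            = insert j0 (univ.filter fun j => i ∈ C' j) := by
          ext j
          simp only [mem_filter, mem_univ, true_and, mem_insert]
          by_cases hj : j = j0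
          · subst hj
            rw [hC, Function.update_self]
            simp [mem_insert]
          · rw [hC, Function.update_of_ne hj]
            simp [hj]
        rw [hfe, card_insert_of_notMem (by
          rw [mem_filter]
          rintro ⟨_, hc⟩
          exact hxC' hc)]
        rw [← hcnt, hq'x]
        omega
      · have hfe : (univ.filter fun j => i ∈ C j) = (univ.filter fun j => i ∈ C' j) := by
          apply filter_congr
          intro j _
          by_cases hj : j = j0
          · subst hj
            rw [hC, Function.update_self]
            simp only [mem_insert]
            constructor
            · rintro (h | h)
              · exact absurd h hix
              · exact h
            · exact Or.inr
          · rw [hC, Function.update_of_ne hj]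
        rw [hfe, ← hcnt, hq'ne i hix]

section Bridge

lemma down_closed_mem_iff {N : ℕ} (T : Finset (Fin N))
    (hdc : ∀ (a b : Fin N), a ≤ b → b ∈ T → a ∈ T) (k : Fin N) :
    k ∈ T ↔ (k : ℕ) < T.card := by
  have hIio : (univ.filter fun a : Fin N => a < k) = Finset.Iio k := by
    ext a
    simp [Finset.mem_Iio]
  have hIic : (univ.filter fun a : Fin N => a ≤ k) = Finset.Iic k := by
    ext a
    simp [Finset.mem_Iic]
  constructor
  · intro hk
    have hsub : univ.filter (fun a : Fin N => a ≤ k) ⊆ T :=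
      fun a ha => hdc a k (mem_filter.1 ha).2 hk
    have hcard : (univ.filter fun a : Fin N => a ≤ k).card = (k : ℕ) + 1 := by
      rw [hIic, Fin.card_Iic]
    have := card_le_card hsub
    omega
  · intro hk
    by_contra hkT
    have hsub : T ⊆ univ.filter fun a : Fin N => a < k := by
      intro a ha
      refine mem_filter.2 ⟨mem_univ _, ?_⟩
      by_contra hak
      push_neg at hak
      exact hkT (hdc k a hak ha)
    have hcard : (univ.filter fun a : Fin N => a < k).card = (k : ℕ) := by
      rw [hIio, Fin.card_Iio]
    have := card_le_card hsub
    omega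

lemma orderEmb_lt_iff {N : ℕ} (R : Finset (Fin N)) {k : ℕ} (h : R.card = k) (i : Fin k)
    (t : ℕ) :
    ((R.orderEmbOfFin h i : Fin N) : ℕ) < t ↔
      (i : ℕ) < (R.filter fun a : Fin N => (a : ℕ) < t).card := by
  set f := R.orderEmbOfFin h with hf
  set T := univ.filter fun j : Fin k => ((f j : Fin N) : ℕ) < t with hT
  have hTcard : T.card = (R.filter fun a : Fin N => (a : ℕ) < t).card := by
    apply Finset.card_bij (fun j _ => f j)
    · intro j hj
      exact mem_filter.2 ⟨Finset.orderEmbOfFin_mem R h j, (mem_filter.1 hj).2⟩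
    · intro j1 _ j2 _ hj
      exact f.injective hj
    · intro a ha
      obtain ⟨haR, hat⟩ := mem_filter.1 ha
      have : a ∈ Set.range f := by
        rw [hf, Finset.range_orderEmbOfFin]
        exact haR
      obtain ⟨j, hj⟩ := this
      refine ⟨j, mem_filter.2 ⟨mem_univ _, ?_⟩, hj⟩
      rw [hj]
      exact hat
  have hdc : ∀ (a b : Fin k), a ≤ b → b ∈ T → a ∈ T := by
    intro a b hab hb
    refine mem_filter.2 ⟨mem_univ _, ?_⟩
    have h1 : f a ≤ f b := f.monotone hab
    have h2 := (mem_filter.1 hb).2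
    have h3 : ((f a : Fin N) : ℕ) ≤ ((f b : Fin N) : ℕ) := h1
    omega
  have := down_closed_mem_iff T hdc i
  rw [hTcard] at this
  rw [← this]
  simp [hT]

lemma pc_mono_iff {N : ℕ} {B S : Finset (Fin N)} (hcard : B.card = S.card) :
    (∀ t, sc B t ≤ sc S t) ↔
      ∀ t, (S.filter fun a : Fin N => (a : ℕ) < t).card
        ≤ (B.filter fun a : Fin N => (a : ℕ) < t).card := by
  constructor
  · intro h t
    have h1 := pc_add_sc B t
    have h2 := pc_add_sc S t
    have := h t
    omega
  · intro h t
    have h1 := pc_add_sc B t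
    have h2 := pc_add_sc S t
    have := h t
    omega

lemma domLE_iff {N : ℕ} (B S : Finset (Fin N)) :
    DomLE B S ↔ (B.card = S.card ∧ Ind S B) := by
  constructor
  · rintro ⟨hcard, hdom⟩
    refine ⟨hcard, ?_⟩
    rw [Ind, pc_mono_iff hcard]
    intro t
    set c := (S.filter fun a : Fin N => (a : ℕ) < t).card with hc
    rcases Nat.eq_zero_or_pos c with hc0 | hcpos
    · omega
    have hcS : c ≤ S.card := card_filter_le _ _
    have hik : c - 1 < S.card := by omega
    set i : Fin S.card := ⟨c - 1, hik⟩ with hi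
    have hSi : ((S.orderEmbOfFin rfl i : Fin N) : ℕ) < t := by
      rw [orderEmb_lt_iff S rfl i t]
      simp only [hi]
      omega
    have hikB : c - 1 < B.card := by omega
    set iB : Fin B.card := ⟨c - 1, hikB⟩ with hiB
    have hBle : (B.orderEmbOfFin rfl iB : Fin N) ≤ (S.orderEmbOfFin rfl i : Fin N) := by
      have hlenB : c - 1 < (B.sort (· ≤ ·)).length := by
        rw [Finset.length_sort]
        exact hikB
      have hlenS : c - 1 < (S.sort (· ≤ ·)).length := by
        rw [Finset.length_sort]
        exact hik
      have := hdom (c - 1) hlenB hlenS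
      rw [Finset.orderEmbOfFin_apply, Finset.orderEmbOfFin_apply]
      simpa [List.get_eq_getElem] using this
    have hBi : ((B.orderEmbOfFin rfl iB : Fin N) : ℕ) < t := by
      have : ((B.orderEmbOfFin rfl iB : Fin N) : ℕ)
          ≤ ((S.orderEmbOfFin rfl i : Fin N) : ℕ) := hBle
      omega
    rw [orderEmb_lt_iff B rfl iB t] at hBi
    simp only [hiB] at hBi
    omega
  · rintro ⟨hcard, hInd⟩
    refine ⟨hcard, ?_⟩
    intro k hRB hRS
    have hkB : k < B.card := by rwa [Finset.length_sort] at hRB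
    have hkS : k < S.card := by rwa [Finset.length_sort] at hRS
    set iB : Fin B.card := ⟨k, hkB⟩ with hiB
    set iS : Fin S.card := ⟨k, hkS⟩ with hiS
    have hpc := (pc_mono_iff hcard).1 hInd
    set t := ((S.orderEmbOfFin rfl iS : Fin N) : ℕ) + 1 with ht
    have hSin : ((S.orderEmbOfFin rfl iS : Fin N) : ℕ) < t := by omega
    rw [orderEmb_lt_iff S rfl iS t] at hSin
    have hBk : ((B.orderEmbOfFin rfl iB : Fin N) : ℕ) < t := by
      rw [orderEmb_lt_iff B rfl iB t]
      have h1 := hpc t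
      have h2 : (iB : ℕ) = k := rfl
      have h3 : (iS : ℕ) = k := rfl
      omega
    have hfinal : ((B.orderEmbOfFin rfl iB : Fin N) : ℕ)
        ≤ ((S.orderEmbOfFin rfl iS : Fin N) : ℕ) := by omega
    have hgB : (B.sort (· ≤ ·)).get ⟨k, hRB⟩ = (B.orderEmbOfFin rfl iB : Fin N) := by
      rw [Finset.orderEmbOfFin_apply]
      simp [List.get_eq_getElem]
      rfl
    have hgS : (S.sort (· ≤ ·)).get ⟨k, hRS⟩ = (S.orderEmbOfFin rfl iS : Fin N) := by
      rw [Finset.orderEmbOfFin_apply]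
      simp [List.get_eq_getElem]
      rfl
    rw [hgB, hgS]
    exact hfinal

end Bridge

section Outer

lemma isB_of_domLE {S B : Finset (Fin n)} (h : DomLE B S) : IsB S ∅ B := by
  obtain ⟨h1, h2⟩ := (domLE_iff B S).1 h
  exact ⟨h1, h2, inter_empty _⟩

lemma sum_indVec (B : Finset (Fin n)) (A : Finset (Fin n)) :
    ∑ i ∈ A, indVec B i = ((B ∩ A).card : ℝ) := by
  unfold indVec
  rw [Finset.sum_ite_mem]
  rw [inter_comm B A]
  simp

lemma smPolytope_subset (S : Finset (Fin n)) :
    smPolytope S ⊆ {y : Fin n → ℝ | (∀ i, 0 ≤ y i) ∧ (∑ i, y i = (S.card : ℝ)) ∧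
      ∀ A : Finset (Fin n), ∑ i ∈ A, y i ≤ (rho S ∅ A : ℝ)} := by
  apply convexHull_min
  · rintro y ⟨B, hB, rfl⟩
    have hIsB : IsB S ∅ B := isB_of_domLE hB
    refine ⟨fun i => ?_, ?_, fun A => ?_⟩
    · unfold indVec
      split <;> norm_num
    · have := sum_indVec B univ
      rw [inter_univ] at this
      rw [this, hIsB.1]
    · rw [sum_indVec B A]
      exact_mod_cast le_rho hIsB A
  · rintro y₁ ⟨h1a, h1b, h1c⟩ y₂ ⟨h2a, h2b, h2c⟩ a b ha hb hab
    have heval : ∀ i, (a • y₁ + b • y₂) i = a * y₁ i + b * y₂ i := fun i => rfl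
    refine ⟨fun i => ?_, ?_, fun A => ?_⟩
    · rw [heval]
      exact add_nonneg (mul_nonneg ha (h1a i)) (mul_nonneg hb (h2a i))
    · simp only [heval]
      rw [Finset.sum_add_distrib, ← Finset.mul_sum, ← Finset.mul_sum, h1b, h2b]
      ring_nf
      nlinarith [hab]
    · simp only [heval]
      rw [Finset.sum_add_distrib, ← Finset.mul_sum, ← Finset.mul_sum]
      calc a * ∑ i ∈ A, y₁ i + b * ∑ i ∈ A, y₂ i
          ≤ a * (rho S ∅ A : ℝ) + b * (rho S ∅ A : ℝ) :=
            add_le_add (mul_le_mul_of_nonneg_left (h1c A) ha)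
              (mul_le_mul_of_nonneg_left (h2c A) hb)
        _ = (rho S ∅ A : ℝ) := by rw [← add_mul, hab, one_mul]

end Outer

end Stmt5Aux

/-- For `D = (D_1, …, D_n)` with `D_j ⊆ [n]`, the lattice points of the Minkowski sum
`Σ_{j=1}^n P(SM_n(D_j))` are exactly the vectors `ξ^C`, `ξ^C_i = #{j : i ∈ C_j}`, over all
tuples `C = (C_1, …, C_n)` with `C_j ≤ D_j` for all `j`. -/
theorem stmt5 (n : ℕ) (D : Fin n → Finset (Fin n)) :
    {p : Fin n → ℝ | p ∈ ∑ j : Fin n, smPolytope (D j) ∧ ∀ i, ∃ m : ℤ, p i = (m : ℝ)} =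
      {p : Fin n → ℝ | ∃ C : Fin n → Finset (Fin n), (∀ j, DomLE (C j) (D j)) ∧
        p = fun i => ((Finset.univ.filter fun j => i ∈ C j).card : ℝ)} := by
  classical
  ext p
  simp only [Set.mem_setOf_eq]
  constructor
  · rintro ⟨hmem, hint⟩
    rw [Set.mem_fintype_sum] at hmem
    obtain ⟨g, hg, hsum⟩ := hmem
    have hbd := fun j => Stmt5Aux.smPolytope_subset (D j) (hg j)
    choose mz hmz using hint
    have happ : ∀ i, p i = ∑ j, g j i := by
      intro i
      rw [← hsum]
      exact (Finset.sum_apply i univ g)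
    have hnn : ∀ i, 0 ≤ p i := by
      intro i
      rw [happ i]
      exact Finset.sum_nonneg fun j _ => (hbd j).1 i
    set q : Fin n → ℕ := fun i => (mz i).toNat with hq
    have hqr : ∀ i, (q i : ℝ) = p i := by
      intro i
      have h1 : (0 : ℝ) ≤ (mz i : ℝ) := by rw [← hmz i]; exact hnn i
      have h2 : 0 ≤ mz i := by exact_mod_cast h1
      have h3 : ((mz i).toNat : ℤ) = mz i := Int.toNat_of_nonneg h2
      have h4 : (q i : ℝ) = ((mz i).toNat : ℝ) := rfl
      rw [h4, hmz i]
      exact_mod_cast congrArg (fun z : ℤ => (z : ℝ)) h3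
    have hNE : ∀ j, ∃ B, Stmt5Aux.IsB (D j) (∅ : Finset (Fin n)) B :=
      fun j => ⟨D j, rfl, Stmt5Aux.Ind.refl _, inter_empty _⟩
    have hsumA : ∀ (A : Finset (Fin n)), ∑ i ∈ A, p i = ∑ j, ∑ i ∈ A, g j i := by
      intro A
      rw [Finset.sum_comm]
      exact Finset.sum_congr rfl fun i _ => happ i
    have hineq : ∀ A : Finset (Fin n),
        ∑ i ∈ A, q i ≤ ∑ j, Stmt5Aux.rho (D j) ∅ A := by
      intro A
      have hr : (∑ i ∈ A, (q i : ℝ)) ≤ ∑ j, (Stmt5Aux.rho (D j) ∅ A : ℝ) := by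
        calc ∑ i ∈ A, (q i : ℝ) = ∑ i ∈ A, p i := Finset.sum_congr rfl fun i _ => hqr i
          _ = ∑ j, ∑ i ∈ A, g j i := hsumA A
          _ ≤ ∑ j, (Stmt5Aux.rho (D j) ∅ A : ℝ) :=
              Finset.sum_le_sum fun j _ => (hbd j).2.2 A
      exact_mod_cast hr
    have heq : ∑ i, q i = ∑ j, (D j).card := by
      have hr : (∑ i, (q i : ℝ)) = ∑ j, ((D j).card : ℝ) := by
        calc ∑ i, (q i : ℝ) = ∑ i, p i := Finset.sum_congr rfl fun i _ => hqr i
          _ = ∑ j, ∑ i, g j i := hsumA univ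
          _ = ∑ j, ((D j).card : ℝ) := Finset.sum_congr rfl fun j _ => (hbd j).2.1
      exact_mod_cast hr
    obtain ⟨C, hCB, hCcnt⟩ := Stmt5Aux.main (∑ i, q i) D (fun _ => ∅) q rfl hNE hineq heq
    refine ⟨C, fun j => (Stmt5Aux.domLE_iff _ _).2 ⟨(hCB j).1, (hCB j).2.1⟩, ?_⟩
    funext i
    rw [← hqr i, hCcnt i]
  · rintro ⟨C, hC, rfl⟩
    constructor
    · rw [Set.mem_fintype_sum]
      refine ⟨fun j => indVec (C j), fun j => subset_convexHull ℝ _ ⟨C j, hC j, rfl⟩, ?_⟩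
      funext i
      rw [Finset.sum_apply i univ (fun j => indVec (C j))]
      unfold indVec
      rw [Finset.sum_boole]
    · intro i
      exact ⟨((Finset.univ.filter fun j => i ∈ C j).card : ℤ), by push_cast; rfl⟩
end

section
/- Let D = (D_1, ..., D_n) with each D_j ⊆ [n]. Every lattice point of the Minkowski sum Σ_{j=1}^n P(SM_n(D_j)) can be written as Σ_{j=1}^n ζ^{B_j}, where for each j, B_j is a basis of SM_n(D_j) (i.e., B_j ≤ D_j) and ζ^{B_j} ∈ {0,1}^n is its indicator vector. -/
set_option maxHeartbeats 1000000

open Finset Pointwise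

namespace SchubertProof

variable {n : ℕ}

/-- number of elements of `S` with value `< t`. -/
def cnt (S : Finset (Fin n)) (t : ℕ) : ℕ := (S.filter (fun i => i.val < t)).card

lemma key_sorted {l : List (Fin n)} (hl : l.Pairwise (· < ·)) {t : ℕ} :
    ∀ (k : ℕ) (hk : k < l.length),
      ((l.get ⟨k, hk⟩).val < t ↔ k < (l.filter (fun x => decide (x.val < t))).length) := by
  induction l with
  | nil => intro k hk; simp at hk
  | cons a l ih =>
    rw [List.pairwise_cons] at hl
    obtain ⟨ha, hl'⟩ := hl
    intro k hk
    by_cases h : a.val < t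
    · rw [List.filter_cons_of_pos (by simpa using h)]
      cases k with
      | zero => simpa using h
      | succ k =>
        simp only [List.get_cons_succ, List.length_cons, Nat.succ_lt_succ_iff]
        exact ih hl' k (by simpa using hk)
    · have hnil : l.filter (fun x => decide (x.val < t)) = [] := by
        rw [List.filter_eq_nil_iff]
        intro x hx
        have hax : a < x := ha x hx
        have : a.val < x.val := hax
        simp only [decide_eq_true_eq]
        omega
      rw [List.filter_cons_of_neg (by simpa using h), hnil]
      simp only [List.length_nil, Nat.not_lt_zero, iff_false]
      cases k with
      | zero => simpa using h
      | succ k =>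
        have hx : l.get ⟨k, by simpa using hk⟩ ∈ l := List.get_mem _ _
        have h2 : a < l.get ⟨k, by simpa using hk⟩ := ha _ hx
        have h3 : a.val < (l.get ⟨k, by simpa using hk⟩).val := h2
        simp only [List.get_cons_succ]
        omega

lemma cnt_eq_length (A : Finset (Fin n)) (t : ℕ) :
    cnt A t = ((A.sort (· ≤ ·)).filter (fun x => decide (x.val < t))).length := by
  classical
  have h1 : (A.sort (· ≤ ·)).toFinset = A := Finset.sort_toFinset _ _
  have h2 : ((A.sort (· ≤ ·)).filter (fun x => decide (x.val < t))).toFinset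
      = A.filter (fun i => i.val < t) := by
    rw [List.toFinset_filter, h1]
    simp
  have h3 : ((A.sort (· ≤ ·)).filter (fun x => decide (x.val < t))).Nodup :=
    (Finset.sort_nodup _ _).filter _
  rw [cnt, ← h2, List.card_toFinset, h3.dedup]

lemma domLE_iff {B S : Finset (Fin n)} :
    DomLE B S ↔ B.card = S.card ∧ ∀ t, cnt S t ≤ cnt B t := by
  constructor
  · rintro ⟨hcard, hget⟩
    refine ⟨hcard, fun t => ?_⟩
    set m := cnt S t with hm
    rcases Nat.eq_zero_or_pos m with h0 | h0
    · omega
    have hlenS : (S.sort (· ≤ ·)).length = S.card := Finset.length_sort _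
    have hlenB : (B.sort (· ≤ ·)).length = B.card := Finset.length_sort _
    have hmlen : m ≤ S.card := by
      rw [hm, cnt]; exact Finset.card_filter_le _ _
    have hS : m - 1 < (S.sort (· ≤ ·)).length := by omega
    have hB : m - 1 < (B.sort (· ≤ ·)).length := by omega
    have hSm : ((S.sort (· ≤ ·)).get ⟨m - 1, hS⟩).val < t := by
      rw [key_sorted (Finset.sortedLT_sort S).pairwise, ← cnt_eq_length]
      omega
    have hBm : ((B.sort (· ≤ ·)).get ⟨m - 1, hB⟩).val < t := by
      have := hget (m - 1) hB hS
      have hle : ((B.sort (· ≤ ·)).get ⟨m - 1, hB⟩).val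
          ≤ ((S.sort (· ≤ ·)).get ⟨m - 1, hS⟩).val := this
      omega
    have := (key_sorted (Finset.sortedLT_sort B).pairwise (m - 1) hB).1 hBm
    rw [← cnt_eq_length] at this
    omega
  · rintro ⟨hcard, hcnt⟩
    refine ⟨hcard, fun k hB hS => ?_⟩
    set t := ((S.sort (· ≤ ·)).get ⟨k, hS⟩).val + 1 with ht
    have hSk : ((S.sort (· ≤ ·)).get ⟨k, hS⟩).val < t := by omega
    have h1 : k < cnt S t := by
      rw [cnt_eq_length]
      exact (key_sorted (Finset.sortedLT_sort S).pairwise k hS).1 hSk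
    have h2 : k < cnt B t := lt_of_lt_of_le h1 (hcnt t)
    have h3 : ((B.sort (· ≤ ·)).get ⟨k, hB⟩).val < t := by
      rw [key_sorted (Finset.sortedLT_sort B).pairwise, ← cnt_eq_length]
      exact h2
    show ((B.sort (· ≤ ·)).get ⟨k, hB⟩).val ≤ ((S.sort (· ≤ ·)).get ⟨k, hS⟩).val
    omega

/-- columns with index < t -/
def colsBelow (n t : ℕ) : Finset (Fin n) := Finset.univ.filter (fun i => i.val < t)

/-- H-polytope description (outer bound) -/
def HP (S : Finset (Fin n)) : Set (Fin n → ℝ) :=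
  {y | (∀ i, 0 ≤ y i ∧ y i ≤ 1) ∧
    (∀ t, (cnt S t : ℝ) ≤ ∑ i ∈ colsBelow n t, y i) ∧
    (∑ i, y i) = S.card}

lemma sum_indVec (B : Finset (Fin n)) (s : Finset (Fin n)) :
    ∑ i ∈ s, indVec B i = ((s.filter (fun i => i ∈ B)).card : ℝ) := by
  classical
  unfold indVec
  simp only [Finset.sum_boole]

lemma convex_HP (S : Finset (Fin n)) : Convex ℝ (HP S) := by
  rintro x hx y hy a b ha hb hab
  obtain ⟨hx1, hx2, hx3⟩ := hx
  obtain ⟨hy1, hy2, hy3⟩ := hy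
  refine ⟨fun i => ?_, fun t => ?_, ?_⟩
  · constructor
    · have := (hx1 i).1; have := (hy1 i).1
      have : 0 ≤ a * x i := mul_nonneg ha (hx1 i).1
      have : 0 ≤ b * y i := mul_nonneg hb (hy1 i).1
      simp only [Pi.add_apply, Pi.smul_apply, smul_eq_mul]
      linarith
    · have h1 : a * x i ≤ a * 1 := mul_le_mul_of_nonneg_left (hx1 i).2 ha
      have h2 : b * y i ≤ b * 1 := mul_le_mul_of_nonneg_left (hy1 i).2 hb
      simp only [Pi.add_apply, Pi.smul_apply, smul_eq_mul]
      linarith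
  · have h1 : a * (cnt S t : ℝ) ≤ a * ∑ i ∈ colsBelow n t, x i :=
      mul_le_mul_of_nonneg_left (hx2 t) ha
    have h2 : b * (cnt S t : ℝ) ≤ b * ∑ i ∈ colsBelow n t, y i :=
      mul_le_mul_of_nonneg_left (hy2 t) hb
    have hsum : ∑ i ∈ colsBelow n t, (a • x + b • y) i
        = a * ∑ i ∈ colsBelow n t, x i + b * ∑ i ∈ colsBelow n t, y i := by
      simp only [Pi.add_apply, Pi.smul_apply, smul_eq_mul]
      rw [Finset.sum_add_distrib, Finset.mul_sum, Finset.mul_sum]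
    rw [hsum]
    nlinarith
  · have hsum : ∑ i, (a • x + b • y) i = a * ∑ i, x i + b * ∑ i, y i := by
      simp only [Pi.add_apply, Pi.smul_apply, smul_eq_mul]
      rw [Finset.sum_add_distrib, Finset.mul_sum, Finset.mul_sum]
    rw [hsum, hx3, hy3]
    ring_nf
    nlinarith [hab]

lemma colsBelow_self : colsBelow n n = Finset.univ := by
  ext i; simp [colsBelow, i.isLt]

lemma colsBelow_zero : colsBelow n 0 = ∅ := by
  ext i; simp [colsBelow]

def InX (c : Fin n → ℕ → ℕ) (pN : Fin n → ℕ) (z : Fin n × Fin n → ℝ) : Prop :=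
  (∀ q, 0 ≤ z q ∧ z q ≤ 1) ∧
  (∀ j t, t ≤ n → (c j t : ℝ) ≤ ∑ i ∈ colsBelow n t, z (j, i)) ∧
  (∀ j, ∑ i, z (j, i) = (c j n : ℝ)) ∧
  (∀ i, ∑ j, z (j, i) = (pN i : ℝ))

/-- tight prefix times of a row -/
noncomputable def TightSet (c : Fin n → ℕ → ℕ) (w : Fin n × Fin n → ℝ) (j : Fin n) : Finset ℕ :=
  (Finset.range (n+1)).filter (fun t => ∑ i ∈ colsBelow n t, w (j, i) = (c j t : ℝ))

noncomputable def bstart (c : Fin n → ℕ → ℕ) (w : Fin n × Fin n → ℝ) (j : Fin n) (i : Fin n) : ℕ :=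
  (insert 0 ((TightSet c w j).filter (fun t => t ≤ i.val))).max' (Finset.insert_nonempty _ _)

noncomputable def bend (c : Fin n → ℕ → ℕ) (w : Fin n × Fin n → ℝ) (j : Fin n) (i : Fin n) : ℕ :=
  (insert n ((TightSet c w j).filter (fun t => i.val < t))).min' (Finset.insert_nonempty _ _)

section helpers

variable {α β M : Type*}

lemma sum_01_card [DecidableEq α] (s : Finset α) (f : α → ℝ)
    (h : ∀ a ∈ s, f a = 0 ∨ f a = 1) :
    ∑ a ∈ s, f a = (((s.filter (fun a => f a = 1))).card : ℝ) := by
  classical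
  rw [← Finset.sum_boole]
  apply Finset.sum_congr rfl
  intro a ha
  rcases h a ha with h0 | h1
  · rw [h0]; simp
  · rw [h1]; simp

lemma sum_attach_filter [AddCommMonoid M] (s : Finset α) (P : α → Prop) [DecidablePred P]
    (F : α → M) :
    ∑ f ∈ s.attach.filter (fun f => P f.1), F f.1 = ∑ q ∈ s.filter P, F q := by
  classical
  rw [Finset.sum_filter, Finset.sum_filter, Finset.sum_attach s (fun a => if P a then F a else 0)]

lemma sum_fiber_union [DecidableEq β] [AddCommMonoid M] (s : Finset α) (φ : α → β)
    (G : Finset α) (hG : G ⊆ s)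
    (hclosed : ∀ g ∈ G, ∀ q ∈ s, φ q = φ g → q ∈ G) (F : α → M)
    (hfib : ∀ b ∈ s.image φ, ∑ q ∈ s.filter (fun q => φ q = b), F q = 0) :
    ∑ q ∈ G, F q = 0 := by
  classical
  have h1 : ∑ q ∈ G, F q = ∑ b ∈ G.image φ, ∑ q ∈ G.filter (fun q => φ q = b), F q :=
    (Finset.sum_fiberwise_of_maps_to (fun q hq => Finset.mem_image_of_mem φ hq) F).symm
  rw [h1]
  apply Finset.sum_eq_zero
  intro b hb
  obtain ⟨g, hg, hgb⟩ := Finset.mem_image.1 hb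
  have hGb : G.filter (fun q => φ q = b) = s.filter (fun q => φ q = b) := by
    ext q
    simp only [Finset.mem_filter]
    constructor
    · rintro ⟨hq, hφ⟩; exact ⟨hG hq, hφ⟩
    · rintro ⟨hq, hφ⟩
      exact ⟨hclosed g hg q hq (by rw [hφ, hgb]), hφ⟩
  rw [hGb]
  exact hfib b (Finset.mem_image.2 ⟨g, hG hg, hgb⟩)

end helpers

lemma convex_XS (c : Fin n → ℕ → ℕ) (pN : Fin n → ℕ) : Convex ℝ {z | InX c pN z} := by
  rintro x hx y hy a b ha hb hab
  obtain ⟨hx1, hx2, hx3, hx4⟩ := hx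
  obtain ⟨hy1, hy2, hy3, hy4⟩ := hy
  have hadd : ∀ (s : Finset (Fin n)) (F : Fin n → Fin n × Fin n),
      ∑ i ∈ s, (a • x + b • y) (F i) = a * ∑ i ∈ s, x (F i) + b * ∑ i ∈ s, y (F i) := by
    intro s F
    simp only [Pi.add_apply, Pi.smul_apply, smul_eq_mul]
    rw [Finset.sum_add_distrib, Finset.mul_sum, Finset.mul_sum]
  have hadd2 : ∀ (s : Finset (Fin n)) (F : Fin n → Fin n × Fin n),
      ∑ i ∈ s, (a • x + b • y) (F i) = a * ∑ i ∈ s, x (F i) + b * ∑ i ∈ s, y (F i) := hadd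
  refine ⟨fun q => ?_, fun j t ht => ?_, fun j => ?_, fun i => ?_⟩
  · have h1 := (hx1 q).1; have h2 := (hy1 q).1
    have h3 := (hx1 q).2; have h4 := (hy1 q).2
    have h5 : 0 ≤ a * x q := mul_nonneg ha h1
    have h6 : 0 ≤ b * y q := mul_nonneg hb h2
    have h7 : a * x q ≤ a * 1 := mul_le_mul_of_nonneg_left h3 ha
    have h8 : b * y q ≤ b * 1 := mul_le_mul_of_nonneg_left h4 hb
    simp only [Pi.add_apply, Pi.smul_apply, smul_eq_mul]
    constructor <;> nlinarith
  · rw [hadd]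
    have h1 : a * (c j t : ℝ) ≤ a * ∑ i ∈ colsBelow n t, x (j, i) :=
      mul_le_mul_of_nonneg_left (hx2 j t ht) ha
    have h2 : b * (c j t : ℝ) ≤ b * ∑ i ∈ colsBelow n t, y (j, i) :=
      mul_le_mul_of_nonneg_left (hy2 j t ht) hb
    nlinarith
  · rw [hadd univ (fun i => (j, i)), hx3, hy3]; nlinarith
  · have : ∑ j, (a • x + b • y) (j, i) = a * ∑ j, x (j, i) + b * ∑ j, y (j, i) := by
      simp only [Pi.add_apply, Pi.smul_apply, smul_eq_mul]
      rw [Finset.sum_add_distrib, Finset.mul_sum, Finset.mul_sum]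
    rw [this, hx4, hy4]; nlinarith

lemma isClosed_XS (c : Fin n → ℕ → ℕ) (pN : Fin n → ℕ) : IsClosed {z | InX c pN z} := by
  have e : {z : Fin n × Fin n → ℝ | InX c pN z}
      = (⋂ q, ({z : Fin n × Fin n → ℝ | 0 ≤ z q} ∩ {z | z q ≤ 1}))
      ∩ ((⋂ j, ⋂ t, ⋂ (_ : t ≤ n), {z : Fin n × Fin n → ℝ | (c j t : ℝ) ≤ ∑ i ∈ colsBelow n t, z (j, i)})
      ∩ ((⋂ j, {z : Fin n × Fin n → ℝ | ∑ i, z (j, i) = (c j n : ℝ)})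
      ∩ (⋂ i, {z : Fin n × Fin n → ℝ | ∑ j, z (j, i) = (pN i : ℝ)}))) := by
    ext z
    simp only [InX, Set.mem_setOf_eq, Set.mem_inter_iff, Set.mem_iInter, Set.mem_setOf_eq]
  rw [e]
  have hcs : ∀ (s : Finset (Fin n)) (F : Fin n → Fin n × Fin n),
      Continuous (fun z : Fin n × Fin n → ℝ => ∑ i ∈ s, z (F i)) := by
    intro s F
    exact continuous_finset_sum _ (fun i _ => continuous_apply (F i))
  refine IsClosed.inter (isClosed_iInter fun q => IsClosed.inter ?_ ?_)
    (IsClosed.inter (isClosed_iInter fun j => isClosed_iInter fun t => isClosed_iInter fun _ => ?_)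
      (IsClosed.inter (isClosed_iInter fun j => ?_) (isClosed_iInter fun i => ?_)))
  · exact isClosed_le continuous_const (continuous_apply q)
  · exact isClosed_le (continuous_apply q) continuous_const
  · exact isClosed_le continuous_const (hcs _ _)
  · exact isClosed_eq (hcs _ _) continuous_const
  · exact isClosed_eq (continuous_finset_sum _ (fun j _ => continuous_apply (j, i))) continuous_const

lemma isCompact_XS (c : Fin n → ℕ → ℕ) (pN : Fin n → ℕ) : IsCompact {z | InX c pN z} := by
  refine IsCompact.of_isClosed_subset
    (isCompact_univ_pi (fun _ : Fin n × Fin n => isCompact_Icc (a := (0:ℝ)) (b := 1)))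
    (isClosed_XS c pN) ?_
  intro z hz
  rw [Set.mem_univ_pi]
  intro q
  exact ⟨(hz.1 q).1, (hz.1 q).2⟩

theorem exists_integral_InX (c : Fin n → ℕ → ℕ) (pN : Fin n → ℕ)
    (hc0 : ∀ j, c j 0 = 0) (hne : ∃ z, InX c pN z) :
    ∃ z, InX c pN z ∧ ∀ q, z q = 0 ∨ z q = 1 := by
  classical
  obtain ⟨w, hwext⟩ := (isCompact_XS c pN).extremePoints_nonempty
    (hne.imp (fun z hz => hz))
  have hwX : InX c pN w := hwext.1
  obtain ⟨hbd, hpre, hrow, hcol⟩ := hwX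
  refine ⟨w, ⟨hbd, hpre, hrow, hcol⟩, ?_⟩
  by_contra hbad
  push_neg at hbad
  obtain ⟨q0, hq01, hq02⟩ := hbad
  -- fractional support
  set Fr : Finset (Fin n × Fin n) := Finset.univ.filter (fun q => w q ≠ 0 ∧ w q ≠ 1) with hFrdef
  have hq0F : q0 ∈ Fr := by simp [hFrdef, hq01, hq02]
  have hFrne : Fr.Nonempty := ⟨q0, hq0F⟩
  have hfrac : ∀ q ∈ Fr, 0 < w q ∧ w q < 1 := by
    intro q hq
    simp only [hFrdef, Finset.mem_filter] at hq
    exact ⟨lt_of_le_of_ne (hbd q).1 (Ne.symm hq.2.1), lt_of_le_of_ne (hbd q).2 hq.2.2⟩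
  have hint : ∀ q, q ∉ Fr → w q = 0 ∨ w q = 1 := by
    intro q hq
    simp only [hFrdef, Finset.mem_filter, Finset.mem_univ, true_and, not_and_or, not_not] at hq
    tauto
  -- tight times
  have hTmem : ∀ j t, t ∈ TightSet c w j ↔
      (t < n + 1 ∧ ∑ i ∈ colsBelow n t, w (j, i) = (c j t : ℝ)) := by
    intro j t; simp [TightSet]
  have h0T : ∀ j, 0 ∈ TightSet c w j := by
    intro j
    rw [hTmem]
    refine ⟨Nat.succ_pos n, ?_⟩
    rw [colsBelow_zero, hc0 j]
    simp
  have hnT : ∀ j, n ∈ TightSet c w j := by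
    intro j
    rw [hTmem]
    exact ⟨Nat.lt_succ_self n, by rw [colsBelow_self]; exact hrow j⟩
  -- start/end block structure
  have hstart_mem : ∀ j i, bstart c w j i ∈ TightSet c w j := by
    intro j i
    have h := Finset.max'_mem _ (Finset.insert_nonempty 0 ((TightSet c w j).filter (fun t => t ≤ i.val)))
    rw [Finset.mem_insert] at h
    rcases h with h | h
    · rw [bstart, h]; exact h0T j
    · exact (Finset.mem_filter.1 h).1
  have hstart_le : ∀ j i, bstart c w j i ≤ i.val := by
    intro j i
    apply Finset.max'_le
    intro y hy
    rw [Finset.mem_insert] at hy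
    rcases hy with h | h
    · omega
    · exact (Finset.mem_filter.1 h).2
  have hstart_ge : ∀ j i t, t ∈ TightSet c w j → t ≤ i.val → t ≤ bstart c w j i := by
    intro j i t ht hle
    exact Finset.le_max' (insert 0 ((TightSet c w j).filter (fun s => s ≤ i.val))) t
      (Finset.mem_insert_of_mem (Finset.mem_filter.2 ⟨ht, hle⟩))
  have hend_mem : ∀ j i, bend c w j i ∈ TightSet c w j := by
    intro j i
    have h := Finset.min'_mem _ (Finset.insert_nonempty n ((TightSet c w j).filter (fun t => i.val < t)))
    rw [Finset.mem_insert] at h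
    rcases h with h | h
    · rw [bend, h]; exact hnT j
    · exact (Finset.mem_filter.1 h).1
  have hend_gt : ∀ j i, i.val < bend c w j i := by
    intro j i
    rw [bend, Finset.lt_min'_iff]
    intro y hy
    rw [Finset.mem_insert] at hy
    rcases hy with h | h
    · omega
    · exact (Finset.mem_filter.1 h).2
  have hend_le : ∀ j i t, t ∈ TightSet c w j → i.val < t → bend c w j i ≤ t := by
    intro j i t ht hlt
    exact Finset.min'_le (insert n ((TightSet c w j).filter (fun s => i.val < s))) t
      (Finset.mem_insert_of_mem (Finset.mem_filter.2 ⟨ht, hlt⟩))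
  have hend_len : ∀ j i, bend c w j i ≤ n := by
    intro j i
    have := (hTmem j _).1 (hend_mem j i)
    omega
  -- KEY: same block start characterization
  have hblock : ∀ j (i i' : Fin n),
      bstart c w j i' = bstart c w j i ↔
        (bstart c w j i ≤ i'.val ∧ i'.val < bend c w j i) := by
    intro j i i'
    constructor
    · intro h
      refine ⟨h ▸ hstart_le j i', ?_⟩
      by_contra hcon
      push_neg at hcon
      have h1 : bend c w j i ≤ bstart c w j i' :=
        hstart_ge j i' _ (hend_mem j i) hcon
      have h2 := hstart_le j i
      have h3 := hend_gt j i
      omega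
    · rintro ⟨h1, h2⟩
      have hle : bstart c w j i ≤ bstart c w j i' :=
        hstart_ge j i' _ (hstart_mem j i) h1
      by_contra hne'
      have hlt : bstart c w j i < bstart c w j i' := lt_of_le_of_ne hle (fun e => hne' e.symm)
      by_cases hc2 : bstart c w j i' ≤ i.val
      · have := hstart_ge j i _ (hstart_mem j i') hc2; omega
      · push_neg at hc2
        have := hend_le j i _ (hstart_mem j i') hc2
        have h4 := hstart_le j i'
        omega
  -- block sums
  have hblocksum : ∀ j (i : Fin n),
      ∑ i' ∈ Finset.univ.filter (fun i' : Fin n => bstart c w j i ≤ i'.val ∧ i'.val < bend c w j i),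
        w (j, i') = (c j (bend c w j i) : ℝ) - (c j (bstart c w j i) : ℝ) := by
    intro j i
    have hsub : colsBelow n (bstart c w j i) ⊆ colsBelow n (bend c w j i) := by
      intro x hx
      simp only [colsBelow, Finset.mem_filter, Finset.mem_univ, true_and] at hx ⊢
      have h1 := hstart_le j i
      have h2 := hend_gt j i
      omega
    have hsd : colsBelow n (bend c w j i) \ colsBelow n (bstart c w j i)
        = Finset.univ.filter (fun i' : Fin n => bstart c w j i ≤ i'.val ∧ i'.val < bend c w j i) := by
      ext x
      simp only [colsBelow, Finset.mem_sdiff, Finset.mem_filter, Finset.mem_univ, true_and]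
      omega
    have h1 := ((hTmem j _).1 (hstart_mem j i)).2
    have h2 := ((hTmem j _).1 (hend_mem j i)).2
    rw [← hsd, Finset.sum_sdiff_eq_sub hsub, h1, h2]
  -- fibers of the block map
  set φB : Fin n × Fin n → Fin n × ℕ := fun q => (q.1, bstart c w q.1 q.2) with hφB
  set φC : Fin n × Fin n → Fin n := fun q => q.2 with hφC
  have hfiberB_eq : ∀ (qj gj : Fin n) (qi gi : Fin n),
      (φB (gj, gi) = φB (qj, qi) ↔
        (gj = qj ∧ bstart c w qj qi ≤ gi.val ∧ gi.val < bend c w qj qi)) := by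
    intro qj gj qi gi
    simp only [hφB, Prod.mk.injEq]
    constructor
    · rintro ⟨rfl, h2⟩
      exact ⟨rfl, (hblock gj qi gi).1 h2⟩
    · rintro ⟨rfl, h2⟩
      exact ⟨rfl, (hblock gj qi gi).2 h2⟩
  -- degree ≥ 2 in block fibers
  have hdegB : ∀ q ∈ Fr, 2 ≤ (Fr.filter (fun g => φB g = φB q)).card := by
    rintro ⟨qj, qi⟩ hq
    by_contra hlt
    push_neg at hlt
    have hq' : (qj, qi) ∈ Fr.filter (fun g => φB g = φB (qj, qi)) :=
      Finset.mem_filter.2 ⟨hq, rfl⟩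
    have hsingle : Fr.filter (fun g => φB g = φB (qj, qi)) = {(qj, qi)} := by
      apply Finset.eq_singleton_iff_unique_mem.2
      refine ⟨hq', fun g hg => ?_⟩
      by_contra hgne
      have h2 : 1 < (Fr.filter (fun g => φB g = φB (qj, qi))).card :=
        Finset.one_lt_card.2 ⟨g, hg, (qj, qi), hq', hgne⟩
      omega
    set s0 := bstart c w qj qi with hs0
    set e0 := bend c w qj qi with he0
    set Blk : Finset (Fin n) := Finset.univ.filter (fun i' : Fin n => s0 ≤ i'.val ∧ i'.val < e0)
      with hBlk
    have hqBlk : qi ∈ Blk := by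
      rw [hBlk]
      exact Finset.mem_filter.2 ⟨Finset.mem_univ _, hstart_le qj qi, hend_gt qj qi⟩
    have hothers : ∀ i' ∈ Blk, i' ≠ qi → w (qj, i') = 0 ∨ w (qj, i') = 1 := by
      intro i' hi' hne'
      by_contra hcon
      push_neg at hcon
      have hmemF : (qj, i') ∈ Fr := by
        simp [hFrdef, hcon.1, hcon.2]
      have hi'2 := Finset.mem_filter.1 hi'
      have hfib : (qj, i') ∈ Fr.filter (fun g => φB g = φB (qj, qi)) :=
        Finset.mem_filter.2 ⟨hmemF, (hfiberB_eq qj qj qi i').2 ⟨rfl, hi'2.2⟩⟩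
      rw [hsingle, Finset.mem_singleton] at hfib
      exact hne' (by injection hfib with h1 h2)
    have hsum1 : ∑ i' ∈ Blk, w (qj, i') = (c qj e0 : ℝ) - (c qj s0 : ℝ) := hblocksum qj qi
    have hsum2 : w (qj, qi) + ∑ i' ∈ Blk.erase qi, w (qj, i') = ∑ i' ∈ Blk, w (qj, i') :=
      Finset.add_sum_erase Blk (fun i' => w (qj, i')) hqBlk
    have hsum3 : ∑ i' ∈ Blk.erase qi, w (qj, i')
        = (((Blk.erase qi).filter (fun i' => w (qj, i') = 1)).card : ℝ) :=
      sum_01_card _ _ (fun a ha =>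
        hothers a (Finset.mem_of_mem_erase ha) (Finset.ne_of_mem_erase ha))
    have hfq := hfrac (qj, qi) hq
    set K : ℕ := ((Blk.erase qi).filter (fun i' => w (qj, i') = 1)).card with hK
    have hwv : w (qj, qi) = (c qj e0 : ℝ) - c qj s0 - K := by
      rw [hsum3] at hsum2
      linarith [hsum1, hsum2]
    obtain ⟨z, hz⟩ : ∃ z : ℤ, w (qj, qi) = (z : ℝ) :=
      ⟨(c qj e0 : ℤ) - c qj s0 - K, by rw [hwv]; push_cast; ring⟩
    rw [hz] at hfq
    have hz1 : (0:ℤ) < z := by exact_mod_cast hfq.1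
    have hz2 : z < 1 := by exact_mod_cast hfq.2
    omega
  -- degree ≥ 2 in column fibers
  have hdegC : ∀ q ∈ Fr, 2 ≤ (Fr.filter (fun g => φC g = φC q)).card := by
    rintro ⟨qj, qi⟩ hq
    by_contra hlt
    push_neg at hlt
    have hq' : (qj, qi) ∈ Fr.filter (fun g => φC g = φC (qj, qi)) :=
      Finset.mem_filter.2 ⟨hq, rfl⟩
    have hsingle : Fr.filter (fun g => φC g = φC (qj, qi)) = {(qj, qi)} := by
      apply Finset.eq_singleton_iff_unique_mem.2
      refine ⟨hq', fun g hg => ?_⟩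
      by_contra hgne
      have h2 : 1 < (Fr.filter (fun g => φC g = φC (qj, qi))).card :=
        Finset.one_lt_card.2 ⟨g, hg, (qj, qi), hq', hgne⟩
      omega
    have hothers : ∀ j' : Fin n, j' ≠ qj → w (j', qi) = 0 ∨ w (j', qi) = 1 := by
      intro j' hne'
      by_contra hcon
      push_neg at hcon
      have hmemF : (j', qi) ∈ Fr := by
        simp [hFrdef, hcon.1, hcon.2]
      have hfib : (j', qi) ∈ Fr.filter (fun g => φC g = φC (qj, qi)) :=
        Finset.mem_filter.2 ⟨hmemF, rfl⟩
      rw [hsingle, Finset.mem_singleton] at hfib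
      exact hne' (by injection hfib with h1 h2)
    have hsum1 : ∑ j', w (j', qi) = (pN qi : ℝ) := hcol qi
    have hsum2 : w (qj, qi) + ∑ j' ∈ Finset.univ.erase qj, w (j', qi) = ∑ j', w (j', qi) :=
      Finset.add_sum_erase Finset.univ (fun j' => w (j', qi)) (Finset.mem_univ qj)
    have hsum3 : ∑ j' ∈ Finset.univ.erase qj, w (j', qi)
        = (((Finset.univ.erase qj).filter (fun j' => w (j', qi) = 1)).card : ℝ) :=
      sum_01_card _ _ (fun a ha => hothers a (Finset.ne_of_mem_erase ha))
    have hfq := hfrac (qj, qi) hq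
    set K : ℕ := ((Finset.univ.erase qj).filter (fun j' => w (j', qi) = 1)).card with hK
    have hwv : w (qj, qi) = (pN qi : ℝ) - K := by
      rw [hsum3] at hsum2
      linarith [hsum1, hsum2]
    obtain ⟨z, hz⟩ : ∃ z : ℤ, w (qj, qi) = (z : ℝ) :=
      ⟨(pN qi : ℤ) - K, by rw [hwv]; push_cast; ring⟩
    rw [hz] at hfq
    have hz1 : (0:ℤ) < z := by exact_mod_cast hfq.1
    have hz2 : z < 1 := by exact_mod_cast hfq.2
    omega
  -- counting
  set TB : Finset (Fin n × ℕ) := Fr.image φB with hTB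
  set TC : Finset (Fin n) := Fr.image φC with hTC
  have hcount : ∀ {β : Type} [DecidableEq β], True := fun {β} [DecidableEq β] => trivial
  have hcardB : 2 * TB.card ≤ Fr.card := by
    have h1 : Fr.card = ∑ b ∈ TB, (Fr.filter (fun q => φB q = b)).card :=
      Finset.card_eq_sum_card_fiberwise (fun q hq => Finset.mem_image_of_mem φB hq)
    have h2 : ∀ b ∈ TB, 2 ≤ (Fr.filter (fun q => φB q = b)).card := by
      intro b hb
      obtain ⟨g, hg, rfl⟩ := Finset.mem_image.1 hb
      exact hdegB g hg
    calc 2 * TB.card = ∑ _b ∈ TB, 2 := by rw [Finset.sum_const, smul_eq_mul, mul_comm]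
    _ ≤ ∑ b ∈ TB, (Fr.filter (fun q => φB q = b)).card := Finset.sum_le_sum h2
    _ = Fr.card := h1.symm
  have hcardC : 2 * TC.card ≤ Fr.card := by
    have h1 : Fr.card = ∑ b ∈ TC, (Fr.filter (fun q => φC q = b)).card :=
      Finset.card_eq_sum_card_fiberwise (fun q hq => Finset.mem_image_of_mem φC hq)
    have h2 : ∀ b ∈ TC, 2 ≤ (Fr.filter (fun q => φC q = b)).card := by
      intro b hb
      obtain ⟨g, hg, rfl⟩ := Finset.mem_image.1 hb
      exact hdegC g hg
    calc 2 * TC.card = ∑ _b ∈ TC, 2 := by rw [Finset.sum_const, smul_eq_mul, mul_comm]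
    _ ≤ ∑ b ∈ TC, (Fr.filter (fun q => φC q = b)).card := Finset.sum_le_sum h2
    _ = Fr.card := h1.symm
  -- linear algebra: construct the fiber-sum linear map and find a kernel direction
  set ΦB : (↥Fr → ℝ) → (↥TB → ℝ) :=
    fun d b => ∑ f ∈ Fr.attach.filter (fun f => φB f.1 = b.1), d f with hΦB
  set ΦC : (↥Fr → ℝ) → (↥TC → ℝ) :=
    fun d cc => ∑ f ∈ Fr.attach.filter (fun f => φC f.1 = cc.1), d f with hΦC
  set Φ : (↥Fr → ℝ) →ₗ[ℝ] ((↥TB → ℝ) × (↥TC → ℝ)) :=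
    { toFun := fun d => (ΦB d, ΦC d)
      map_add' := by
        intro d e
        refine Prod.ext ?_ ?_ <;> funext b <;>
          simp [hΦB, hΦC, Finset.sum_add_distrib]
      map_smul' := by
        intro a d
        refine Prod.ext ?_ ?_ <;> funext b <;>
          simp [hΦB, hΦC, Finset.mul_sum] } with hΦ
  set lam : ((↥TB → ℝ) × (↥TC → ℝ)) →ₗ[ℝ] ℝ :=
    { toFun := fun v => (∑ b, v.1 b) - (∑ cc, v.2 cc)
      map_add' := by
        intro v u
        simp only [Prod.fst_add, Prod.snd_add, Pi.add_apply, Finset.sum_add_distrib]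
        ring
      map_smul' := by
        intro a v
        simp only [Prod.smul_fst, Prod.smul_snd, Pi.smul_apply, smul_eq_mul, RingHom.id_apply,
          ← Finset.mul_sum]
        ring } with hlam
  have hrange0 : ∀ d, lam (Φ d) = 0 := by
    intro d
    show (∑ b : ↥TB, ΦB d b) - (∑ cc : ↥TC, ΦC d cc) = 0
    have hB : ∑ b : ↥TB, ΦB d b = ∑ f ∈ Fr.attach, d f := by
      rw [Finset.univ_eq_attach]
      have e1 : ∀ b ∈ TB.attach, ΦB d b
          = (fun b' => ∑ f ∈ Fr.attach.filter (fun f => φB f.1 = b'), d f) b.1 := by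
        intro b _; rfl
      rw [Finset.sum_congr rfl e1,
        Finset.sum_attach TB (fun b' => ∑ f ∈ Fr.attach.filter (fun f => φB f.1 = b'), d f)]
      exact Finset.sum_fiberwise_of_maps_to (fun f _ => Finset.mem_image_of_mem φB f.2) d
    have hC : ∑ cc : ↥TC, ΦC d cc = ∑ f ∈ Fr.attach, d f := by
      rw [Finset.univ_eq_attach]
      have e1 : ∀ b ∈ TC.attach, ΦC d b
          = (fun b' => ∑ f ∈ Fr.attach.filter (fun f => φC f.1 = b'), d f) b.1 := by
        intro b _; rfl
      rw [Finset.sum_congr rfl e1,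
        Finset.sum_attach TC (fun b' => ∑ f ∈ Fr.attach.filter (fun f => φC f.1 = b'), d f)]
      exact Finset.sum_fiberwise_of_maps_to (fun f _ => Finset.mem_image_of_mem φC f.2) d
    rw [hB, hC, sub_self]
  have hTBne : TB.Nonempty := hFrne.image _
  obtain ⟨b0m, hb0⟩ := hTBne
  have hlam_surj : Function.Surjective lam := by
    intro r
    refine ⟨((fun b => if b = ⟨b0m, hb0⟩ then r else 0), 0), ?_⟩
    show (∑ b : ↥TB, if b = ⟨b0m, hb0⟩ then r else 0) - (∑ _cc : ↥TC, (0:ℝ)) = r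
    rw [Finset.sum_ite_eq' Finset.univ (⟨b0m, hb0⟩ : ↥TB) (fun _ => r)]
    simp
  have hfin1 : Module.finrank ℝ (↥Fr → ℝ) = Fr.card := by
    rw [Module.finrank_pi]; exact Fintype.card_coe Fr
  have hfinV : Module.finrank ℝ ((↥TB → ℝ) × (↥TC → ℝ)) = TB.card + TC.card := by
    rw [Module.finrank_prod, Module.finrank_pi, Module.finrank_pi, Fintype.card_coe,
      Fintype.card_coe]
  have hk : Module.finrank ℝ (LinearMap.ker lam) + 1 = TB.card + TC.card := by
    have h1 := LinearMap.finrank_range_add_finrank_ker lam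
    rw [LinearMap.range_eq_top_of_surjective lam hlam_surj, finrank_top, hfinV] at h1
    have hfr : Module.finrank ℝ ℝ = 1 := Module.finrank_self ℝ
    omega
  have hΦnotinj : ¬ Function.Injective Φ := by
    intro hinj
    have h1 : Module.finrank ℝ (LinearMap.range Φ) = Fr.card := by
      rw [LinearMap.finrank_range_of_inj hinj, hfin1]
    have h2 : LinearMap.range Φ ≤ LinearMap.ker lam := by
      rintro v ⟨d, rfl⟩
      exact LinearMap.mem_ker.2 (hrange0 d)
    have h3 := Submodule.finrank_mono h2
    rw [h1] at h3
    have hm1 : 1 ≤ Fr.card := Finset.card_pos.2 hFrne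
    omega
  obtain ⟨d1, d2, heq12, hne12⟩ := Function.not_injective_iff.1 hΦnotinj
  set d0 : ↥Fr → ℝ := d1 - d2 with hd0
  have hΦd0 : Φ d0 = 0 := by rw [hd0, map_sub, heq12, sub_self]
  have hd0ne : d0 ≠ 0 := sub_ne_zero.2 hne12
  set dd : Fin n × Fin n → ℝ := fun q => if h : q ∈ Fr then d0 ⟨q, h⟩ else 0 with hdd
  have hddF : ∀ (f : ↥Fr), dd f.1 = d0 f := by
    intro f
    rw [hdd]
    simp only [f.2, dif_pos]
  have hddnF : ∀ q, q ∉ Fr → dd q = 0 := by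
    intro q h
    rw [hdd]
    simp only [h, dif_neg, not_false_iff]
  have hddne : dd ≠ 0 := by
    obtain ⟨f, hf⟩ := Function.ne_iff.1 hd0ne
    intro hc
    apply hf
    have h1 := congrFun hc f.1
    rw [hddF f] at h1
    simpa using h1
  have hfibB : ∀ b ∈ TB, ∑ q ∈ Fr.filter (fun q => φB q = b), dd q = 0 := by
    intro b hb
    have h1 : (Φ d0).1 ⟨b, hb⟩ = 0 := by rw [hΦd0]; rfl
    have h2 : ∑ f ∈ Fr.attach.filter (fun f => φB f.1 = b), d0 f = 0 := h1
    calc ∑ q ∈ Fr.filter (fun q => φB q = b), dd q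
        = ∑ f ∈ Fr.attach.filter (fun f => φB f.1 = b), dd f.1 :=
          (sum_attach_filter Fr _ dd).symm
      _ = ∑ f ∈ Fr.attach.filter (fun f => φB f.1 = b), d0 f :=
          Finset.sum_congr rfl (fun f _ => hddF f)
      _ = 0 := h2
  have hfibC : ∀ b ∈ TC, ∑ q ∈ Fr.filter (fun q => φC q = b), dd q = 0 := by
    intro b hb
    have h1 : (Φ d0).2 ⟨b, hb⟩ = 0 := by rw [hΦd0]; rfl
    have h2 : ∑ f ∈ Fr.attach.filter (fun f => φC f.1 = b), d0 f = 0 := h1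
    calc ∑ q ∈ Fr.filter (fun q => φC q = b), dd q
        = ∑ f ∈ Fr.attach.filter (fun f => φC f.1 = b), dd f.1 :=
          (sum_attach_filter Fr _ dd).symm
      _ = ∑ f ∈ Fr.attach.filter (fun f => φC f.1 = b), d0 f :=
          Finset.sum_congr rfl (fun f _ => hddF f)
      _ = 0 := h2
  -- prefix sums of dd vanish at tight times
  have hpredd : ∀ j t, t ∈ TightSet c w j → ∑ i ∈ colsBelow n t, dd (j, i) = 0 := by
    intro j t ht
    set G : Finset (Fin n × Fin n) := Fr.filter (fun q => q.1 = j ∧ q.2.val < t) with hG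
    have e2 : ∑ i ∈ colsBelow n t, dd (j, i)
        = ∑ i ∈ (colsBelow n t).filter (fun i => (j, i) ∈ Fr), dd (j, i) :=
      (Finset.sum_filter_of_ne (fun i _ hne => by
        by_contra hmem
        exact hne (hddnF _ hmem))).symm
    have e3 : ((colsBelow n t).filter (fun i => (j, i) ∈ Fr)).map
        ⟨fun i => (j, i), fun a b h => by injection h⟩ = G := by
      ext q
      simp only [Finset.mem_map, Finset.mem_filter, Function.Embedding.coeFn_mk, hG,
        colsBelow, Finset.mem_univ, true_and]
      constructor
      · rintro ⟨i, ⟨hit, hiF⟩, rfl⟩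
        exact ⟨hiF, rfl, hit⟩
      · rintro ⟨hqF, hq1, hq2⟩
        have hq' : (j, q.2) = q := by rw [← hq1]
        exact ⟨q.2, ⟨hq2, by rw [hq']; exact hqF⟩, hq'⟩
    have e4 : ∑ q ∈ G, dd q = 0 := by
      refine sum_fiber_union Fr φB G (Finset.filter_subset _ _) ?_ dd ?_
      · rintro ⟨gj, gi⟩ hg ⟨qj, qi⟩ hq hφ
        rw [hG, Finset.mem_filter] at hg ⊢
        obtain ⟨hgF, hgj, hgi⟩ := hg
        obtain ⟨hqg, h1, h2⟩ := (hfiberB_eq gj qj gi qi).1 hφ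
        have hgj' : gj = j := hgj
        have hgiT : gi.val < t := hgi
        have hbl : bend c w gj gi ≤ t := hend_le gj gi t (by rw [hgj']; exact ht) hgiT
        refine ⟨hq, ?_, ?_⟩
        · show qj = j
          rw [hqg, hgj']
        · show qi.val < t
          omega
      · intro b hb
        exact hfibB b (by rwa [hTB])
    have e5 : ∑ i ∈ (colsBelow n t).filter (fun i => (j, i) ∈ Fr), dd (j, i)
        = ∑ q ∈ G, dd q := by
      rw [← e3, Finset.sum_map]
      rfl
    rw [e2, e5]
    exact e4
  have hrowdd : ∀ j, ∑ i, dd (j, i) = 0 := by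
    intro j
    have h1 := hpredd j n (hnT j)
    rwa [colsBelow_self] at h1
  have hcoldd : ∀ i : Fin n, ∑ j', dd (j', i) = 0 := by
    intro i
    set G : Finset (Fin n × Fin n) := Fr.filter (fun q => q.2 = i) with hG
    have e2 : ∑ j' : Fin n, dd (j', i)
        = ∑ j' ∈ Finset.univ.filter (fun j' : Fin n => (j', i) ∈ Fr), dd (j', i) :=
      (Finset.sum_filter_of_ne (fun j' _ hne => by
        by_contra hmem
        exact hne (hddnF _ hmem))).symm
    have e3 : (Finset.univ.filter (fun j' : Fin n => (j', i) ∈ Fr)).map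
        ⟨fun j' => (j', i), fun a b h => by injection h⟩ = G := by
      ext q
      simp only [Finset.mem_map, Finset.mem_filter, Function.Embedding.coeFn_mk, hG,
        Finset.mem_univ, true_and]
      constructor
      · rintro ⟨j', hjF, rfl⟩
        exact ⟨hjF, rfl⟩
      · rintro ⟨hqF, hq2⟩
        have hq' : (q.1, i) = q := by rw [← hq2]
        exact ⟨q.1, by rw [hq']; exact hqF, hq'⟩
    have e4 : ∑ q ∈ G, dd q = 0 := by
      refine sum_fiber_union Fr φC G (Finset.filter_subset _ _) ?_ dd ?_
      · rintro ⟨gj, gi⟩ hg ⟨qj, qi⟩ hq hφ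
        rw [hG, Finset.mem_filter] at hg ⊢
        obtain ⟨hgF, hgi⟩ := hg
        have : qi = gi := hφ
        exact ⟨hq, by rw [this, hgi]⟩
      · intro b hb
        exact hfibC b (by rwa [hTC])
    have e5 : ∑ j' ∈ Finset.univ.filter (fun j' : Fin n => (j', i) ∈ Fr), dd (j', i)
        = ∑ q ∈ G, dd q := by
      rw [← e3, Finset.sum_map]
      rfl
    rw [e2, e5]
    exact e4
  -- choice of epsilon
  set NT : Finset (Fin n × ℕ) :=
    (Finset.univ ×ˢ Finset.range (n+1)).filter (fun jt => jt.2 ∉ TightSet c w jt.1) with hNT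
  set E1 : Finset ℝ := Fr.image (fun q => min (w q) (1 - w q) / (|dd q| + 1)) with hE1
  set E2 : Finset ℝ := NT.image (fun jt =>
    ((∑ i ∈ colsBelow n jt.2, w (jt.1, i)) - c jt.1 jt.2)
      / (|∑ i ∈ colsBelow n jt.2, dd (jt.1, i)| + 1)) with hE2
  have h1mem : (1:ℝ) ∈ (E1 ∪ E2) ∪ {1} := by simp
  set ε : ℝ := ((E1 ∪ E2) ∪ {1}).min' ⟨1, h1mem⟩ with hε
  have hεmem := Finset.min'_mem ((E1 ∪ E2) ∪ {1}) ⟨1, h1mem⟩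
  have hεle : ∀ r ∈ (E1 ∪ E2) ∪ {1}, ε ≤ r := fun r hr => Finset.min'_le _ r hr
  have hallpos : ∀ r ∈ (E1 ∪ E2) ∪ {1}, 0 < r := by
    intro r hr
    rcases Finset.mem_union.1 hr with hr | hr
    · rcases Finset.mem_union.1 hr with hr | hr
      · obtain ⟨q, hq, rfl⟩ := Finset.mem_image.1 hr
        have h1 := hfrac q hq
        have h2 : 0 < min (w q) (1 - w q) := lt_min h1.1 (by linarith [h1.2])
        have h3 : (0:ℝ) < |dd q| + 1 := by positivity
        exact div_pos h2 h3
      · obtain ⟨jt, hjt, rfl⟩ := Finset.mem_image.1 hr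
        rw [hNT, Finset.mem_filter] at hjt
        obtain ⟨hjt1, hjt2⟩ := hjt
        have htn : jt.2 ≤ n := by
          have := (Finset.mem_product.1 hjt1).2
          rw [Finset.mem_range] at this
          omega
        have hle := hpre jt.1 jt.2 htn
        have hne' : ∑ i ∈ colsBelow n jt.2, w (jt.1, i) ≠ (c jt.1 jt.2 : ℝ) := by
          intro hc
          exact hjt2 ((hTmem jt.1 jt.2).2 ⟨by omega, hc⟩)
        have h2 : (0:ℝ) < (∑ i ∈ colsBelow n jt.2, w (jt.1, i)) - c jt.1 jt.2 := by
          rcases lt_or_eq_of_le hle with h | h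
          · linarith
          · exact absurd h.symm hne'
        have h3 : (0:ℝ) < |∑ i ∈ colsBelow n jt.2, dd (jt.1, i)| + 1 := by positivity
        exact div_pos h2 h3
    · rw [Finset.mem_singleton] at hr
      rw [hr]; norm_num
  have hεpos : 0 < ε := hallpos _ hεmem
  -- perturbed points stay feasible
  have hpert : ∀ θ : ℝ, |θ| ≤ ε → InX c pN (fun q => w q + θ * dd q) := by
    intro θ hθ
    have hθ0 : 0 ≤ ε := hεpos.le
    refine ⟨fun q => ?_, fun j t ht => ?_, fun j => ?_, fun i => ?_⟩
    · by_cases hqF : q ∈ Fr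
      · have h1 : ε ≤ min (w q) (1 - w q) / (|dd q| + 1) :=
          hεle _ (Finset.mem_union_left _ (Finset.mem_union_left _
            (Finset.mem_image_of_mem _ hqF)))
        have h2 : (0:ℝ) < |dd q| + 1 := by positivity
        have h5 : ε * (|dd q| + 1) ≤ min (w q) (1 - w q) := (le_div_iff₀ h2).1 h1
        have h3 : |θ * dd q| = |θ| * |dd q| := abs_mul θ (dd q)
        have h4 : |θ| * |dd q| ≤ ε * |dd q| :=
          mul_le_mul_of_nonneg_right hθ (abs_nonneg _)
        have h5' : ε * (|dd q| + 1) = ε * |dd q| + ε := by ring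
        have h6 : |θ * dd q| ≤ min (w q) (1 - w q) := by
          rw [h3]
          linarith
        have h7 := abs_le.1 h6
        have hmin1 : min (w q) (1 - w q) ≤ w q := min_le_left _ _
        have hmin2 : min (w q) (1 - w q) ≤ 1 - w q := min_le_right _ _
        constructor
        · show 0 ≤ w q + θ * dd q
          linarith [h7.1]
        · show w q + θ * dd q ≤ 1
          linarith [h7.2]
      · have h0 := hddnF q hqF
        show 0 ≤ w q + θ * dd q ∧ w q + θ * dd q ≤ 1
        rw [h0, mul_zero, add_zero]
        exact hbd q
    · show (c j t : ℝ) ≤ ∑ i ∈ colsBelow n t, (w (j, i) + θ * dd (j, i))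
      rw [Finset.sum_add_distrib, ← Finset.mul_sum]
      by_cases htT : t ∈ TightSet c w j
      · rw [hpredd j t htT, mul_zero, add_zero]
        exact hpre j t ht
      · set Sd := ∑ i ∈ colsBelow n t, dd (j, i) with hSd
        set Sw := ∑ i ∈ colsBelow n t, w (j, i) with hSw
        have hjtNT : (j, t) ∈ NT := by
          rw [hNT, Finset.mem_filter]
          exact ⟨Finset.mem_product.2 ⟨Finset.mem_univ _, Finset.mem_range.2 (by omega)⟩, htT⟩
        have h1 : ε ≤ (Sw - c j t) / (|Sd| + 1) :=
          hεle _ (Finset.mem_union_left _ (Finset.mem_union_right _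
            (Finset.mem_image_of_mem _ hjtNT)))
        have h2 : (0:ℝ) < |Sd| + 1 := by positivity
        have h3 : ε * (|Sd| + 1) ≤ Sw - c j t := (le_div_iff₀ h2).1 h1
        have h4 : |θ * Sd| ≤ ε * |Sd| := by
          rw [abs_mul]
          exact mul_le_mul_of_nonneg_right hθ (abs_nonneg _)
        have h5' : ε * (|Sd| + 1) = ε * |Sd| + ε := by ring
        have h6 : |θ * Sd| ≤ Sw - c j t := by linarith
        have h7 := (abs_le.1 h6).1
        linarith
    · show ∑ i, (w (j, i) + θ * dd (j, i)) = (c j n : ℝ)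
      rw [Finset.sum_add_distrib, ← Finset.mul_sum, hrowdd j, mul_zero, add_zero]
      exact hrow j
    · show ∑ j', (w (j', i) + θ * dd (j', i)) = (pN i : ℝ)
      rw [Finset.sum_add_distrib, ← Finset.mul_sum, hcoldd i, mul_zero, add_zero]
      exact hcol i
  have hx1 : InX c pN (fun q => w q + ε * dd q) := hpert ε (by rw [abs_of_pos hεpos])
  have hx2 : InX c pN (fun q => w q + (-ε) * dd q) :=
    hpert (-ε) (by rw [abs_neg, abs_of_pos hεpos])
  rw [mem_extremePoints] at hwext
  have hseg : w ∈ openSegment ℝ (fun q => w q + (-ε) * dd q) (fun q => w q + ε * dd q) := by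
    refine ⟨1/2, 1/2, by norm_num, by norm_num, by norm_num, ?_⟩
    funext q
    simp only [Pi.add_apply, Pi.smul_apply, smul_eq_mul]
    ring
  have hfin := (hwext.2 _ hx2 _ hx1 hseg).2
  apply hddne
  funext q
  have h1 := congrFun hfin q
  have h2 : ε * dd q = 0 := by
    have : w q + ε * dd q = w q := h1
    linarith
  have h3 := mul_eq_zero.1 h2
  rcases h3 with h3 | h3
  · exact absurd h3 (ne_of_gt hεpos)
  · exact h3

lemma cnt_zero (A : Finset (Fin n)) : cnt A 0 = 0 := by
  simp [cnt]

lemma cnt_all (A : Finset (Fin n)) {t : ℕ} (ht : n ≤ t) : cnt A t = A.card := by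
  unfold cnt
  congr 1
  apply Finset.filter_true_of_mem
  intro i _
  have := i.isLt
  omega

theorem core_exists_B (c : Fin n → ℕ → ℕ) (pN : Fin n → ℕ) (hc0 : ∀ j, c j 0 = 0)
    (hne : ∃ z, InX c pN z) :
    ∃ B : Fin n → Finset (Fin n),
      (∀ j t, t ≤ n → c j t ≤ cnt (B j) t) ∧
      (∀ j, (B j).card = c j n) ∧
      (∀ i, (Finset.univ.filter (fun j => i ∈ B j)).card = pN i) := by
  classical
  obtain ⟨z, hz, h01⟩ := exists_integral_InX c pN hc0 hne
  obtain ⟨hbd, hpre, hrow, hcol⟩ := hz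
  have hsum : ∀ (j : Fin n) (s : Finset (Fin n)),
      ∑ i ∈ s, z (j, i) = (((s.filter (fun i => z (j, i) = 1))).card : ℝ) :=
    fun j s => sum_01_card s _ (fun a _ => h01 (j, a))
  refine ⟨fun j => Finset.univ.filter (fun i => z (j, i) = 1), fun j t ht => ?_, fun j => ?_,
    fun i => ?_⟩
  · have h1 := hpre j t ht
    rw [hsum j (colsBelow n t)] at h1
    have h2 : (colsBelow n t).filter (fun i => z (j, i) = 1)
        = (Finset.univ.filter (fun i => z (j, i) = 1)).filter (fun i => i.val < t) := by
      rw [colsBelow, Finset.filter_filter, Finset.filter_filter]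
      congr 1
      funext i
      exact propext (and_comm)
    rw [h2] at h1
    have h3 : (c j t : ℝ) ≤
        ((((Finset.univ.filter (fun i => z (j, i) = 1)).filter (fun i => i.val < t))).card : ℝ) := h1
    exact_mod_cast h3
  · have h1 := hrow j
    rw [show (∑ i, z (j, i)) = ∑ i ∈ Finset.univ, z (j, i) from rfl, hsum j Finset.univ] at h1
    exact_mod_cast h1
  · have h1 := hcol i
    have h2 : ∑ j', z (j', i)
        = (((Finset.univ.filter (fun j' => z (j', i) = 1))).card : ℝ) :=
      sum_01_card Finset.univ _ (fun a _ => h01 (a, i))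
    rw [h2] at h1
    have h3 : (Finset.univ.filter (fun j => i ∈ Finset.univ.filter (fun i' => z (j, i') = 1)))
        = Finset.univ.filter (fun j' => z (j', i) = 1) := by
      congr 1
      funext j
      simp
    rw [h3]
    exact_mod_cast h1


lemma gen_subset_HP (S : Finset (Fin n)) :
    {x | ∃ B : Finset (Fin n), DomLE B S ∧ x = indVec B} ⊆ HP S := by
  rintro x ⟨B, hB, rfl⟩
  obtain ⟨hcard, hcnt⟩ := domLE_iff.1 hB
  refine ⟨fun i => ?_, fun t => ?_, ?_⟩
  · unfold indVec
    split <;> norm_num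
  · rw [sum_indVec]
    have h1 : (colsBelow n t).filter (fun i => i ∈ B) = B.filter (fun i => i.val < t) := by
      rw [colsBelow, Finset.filter_filter]
      ext i
      simp only [Finset.mem_filter, Finset.mem_univ, true_and]
      exact and_comm
    rw [h1]
    have h2 := hcnt t
    unfold cnt at h2
    exact_mod_cast h2
  · rw [show (∑ i, indVec B i) = ∑ i ∈ Finset.univ, indVec B i from rfl, sum_indVec]
    have h1 : Finset.univ.filter (fun i => i ∈ B) = B := by
      ext i; simp
    rw [h1, hcard]

lemma smPolytope_subset_HP (S : Finset (Fin n)) : smPolytope S ⊆ HP S :=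
  convexHull_min (gen_subset_HP S) (convex_HP S)

end SchubertProof

/-- Every lattice point of the Minkowski sum `Σ_{j=1}^n P(SM_n(D_j))` can be written as
`Σ_{j=1}^n ζ^{B_j}` where each `B_j` is a basis of `SM_n(D_j)` (i.e. `B_j ≤ D_j`) and
`ζ^{B_j}` is its indicator vector. -/
theorem stmt6 (n : ℕ) (D : Fin n → Finset (Fin n)) (p : Fin n → ℝ)
    (hp : p ∈ ∑ j : Fin n, smPolytope (D j)) (hint : ∀ i, ∃ m : ℤ, p i = (m : ℝ)) :
    ∃ B : Fin n → Finset (Fin n), (∀ j, DomLE (B j) (D j)) ∧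
      p = ∑ j : Fin n, indVec (B j) := by
  classical
  open SchubertProof in
  rw [Set.mem_fintype_sum] at hp
  obtain ⟨g, hg, hgsum⟩ := hp
  have hgH : ∀ j, g j ∈ SchubertProof.HP (D j) := fun j =>
    SchubertProof.smPolytope_subset_HP (D j) (hg j)
  have hpsum : ∀ i, p i = ∑ j, g j i := by
    intro i
    rw [← hgsum]
    simp [Finset.sum_apply]
  have hpbd : ∀ i, 0 ≤ p i := by
    intro i
    rw [hpsum i]
    exact Finset.sum_nonneg (fun j _ => ((hgH j).1 i).1)
  set pN : Fin n → ℕ := fun i => (Classical.choose (hint i)).toNat with hpNdef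
  have hpN : ∀ i, (pN i : ℝ) = p i := by
    intro i
    have hs := Classical.choose_spec (hint i)
    have hnn : 0 ≤ Classical.choose (hint i) := by
      have := hpbd i
      rw [hs] at this
      exact_mod_cast this
    calc (pN i : ℝ) = (((Classical.choose (hint i)).toNat : ℤ) : ℝ) := by push_cast; rfl
      _ = ((Classical.choose (hint i) : ℤ) : ℝ) := by rw [Int.toNat_of_nonneg hnn]
      _ = p i := hs.symm
  set c : Fin n → ℕ → ℕ := fun j t => SchubertProof.cnt (D j) t with hcdef
  have hc0 : ∀ j, c j 0 = 0 := fun j => SchubertProof.cnt_zero (D j)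
  have hz : SchubertProof.InX c pN (fun q => g q.1 q.2) := by
    refine ⟨fun q => (hgH q.1).1 q.2, fun j t _ => (hgH j).2.1 t, fun j => ?_, fun i => ?_⟩
    · rw [(hgH j).2.2, hcdef]
      norm_cast
      exact (SchubertProof.cnt_all (D j) (le_refl n)).symm
    · rw [← hpsum i, hpN i]
  obtain ⟨B, hB1, hB2, hB3⟩ := SchubertProof.core_exists_B c pN hc0 ⟨_, hz⟩
  refine ⟨B, fun j => SchubertProof.domLE_iff.2 ⟨?_, fun t => ?_⟩, ?_⟩
  · rw [hB2 j, hcdef]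
    exact SchubertProof.cnt_all (D j) (le_refl n)
  · by_cases ht : t ≤ n
    · exact hB1 j t ht
    · push_neg at ht
      have h1 : SchubertProof.cnt (D j) t = (D j).card := SchubertProof.cnt_all (D j) (by omega)
      have h2 : SchubertProof.cnt (B j) t = (B j).card := SchubertProof.cnt_all (B j) (by omega)
      have h3 : (B j).card = (D j).card := by
        rw [hB2 j]
        exact SchubertProof.cnt_all (D j) (le_refl n)
      rw [h1, h2, h3]
  · funext i
    have h1 : (∑ j : Fin n, indVec (B j)) i = ∑ j, indVec (B j) i := by
      simp [Finset.sum_apply]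
    rw [h1]
    have h2 : ∑ j, indVec (B j) i
        = ((Finset.univ.filter (fun j => i ∈ B j)).card : ℝ) := by
      have h4 := SchubertProof.sum_01_card Finset.univ (fun j => indVec (B j) i)
        (fun a _ => by unfold indVec; by_cases h : i ∈ B a <;> simp [h])
      rw [h4]
      have hiff : ∀ j ∈ Finset.univ, ((fun j => indVec (B j) i) j = 1 ↔ i ∈ B j) := by
        intro j _
        unfold indVec
        by_cases h : i ∈ B j <;> simp [h]
      rw [Finset.filter_congr hiff]
    rw [h2, hB3 i, hpN i]
end

section
/- Let D ⊆ [n]² be a diagram with columns D_j, let j ∈ [n], and let I ⊆ [n]. Suppose word_{j,I}(D) has p paired ()'s and q ⋆'s. Then there exists a basis B of SM_n(D_j) (i.e., B ≤ D_j) with #(I ∩ B) = p + q; in particular the rank of I in SM_n(D_j) is at least p + q. -/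
open Finset

lemma domLE_of_counts {n : ℕ} {B S : Finset (Fin n)} (hcard : B.card = S.card)
    (hcnt : ∀ t : Fin n, (B.filter fun x => t ≤ x).card ≤ (S.filter fun x => t ≤ x).card) :
    DomLE B S := by
  refine ⟨hcard, ?_⟩
  intro k hB hS
  by_contra hlt
  push_neg at hlt
  set sb := B.sort (· ≤ ·) with hsb
  set ss := S.sort (· ≤ ·) with hss
  set t := sb.get ⟨k, hB⟩ with ht
  have hlenB : sb.length = B.card := Finset.length_sort _
  have hlenS : ss.length = S.card := Finset.length_sort _
  have h1 : sb.length - k ≤ (B.filter fun x => t ≤ x).card := by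
    have := Finset.card_le_card_of_injOn (fun m : Fin sb.length => sb.get m)
      (s := Finset.Ici (⟨k, hB⟩ : Fin sb.length))
      (t := B.filter fun x => t ≤ x)
      (fun m hm => by
        rw [Finset.mem_coe, Finset.mem_filter]
        refine ⟨(Finset.mem_sort _).1 (sb.get_mem _), ?_⟩
        exact (B.sortedLT_sort).strictMono_get.monotone (Finset.mem_Ici.1 hm))
      ((B.sortedLT_sort).strictMono_get.injective.injOn)
    simpa [Fin.card_Ici] using this
  have h2 : k + 1 ≤ (S.filter fun x => x < t).card := by
    have := Finset.card_le_card_of_injOn (fun m : Fin ss.length => ss.get m)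
      (s := Finset.Iic (⟨k, hS⟩ : Fin ss.length))
      (t := S.filter fun x => x < t)
      (fun m hm => by
        rw [Finset.mem_coe, Finset.mem_filter]
        refine ⟨(Finset.mem_sort _).1 (ss.get_mem _), ?_⟩
        exact lt_of_le_of_lt ((S.sortedLT_sort).strictMono_get.monotone (Finset.mem_Iic.1 hm)) hlt)
      ((S.sortedLT_sort).strictMono_get.injective.injOn)
    simpa [Fin.card_Iic] using this
  have h3 : (S.filter fun x => t ≤ x).card + (S.filter fun x => x < t).card = S.card := by
    have he : (S.filter fun x => x < t) = S.filter fun x => ¬ t ≤ x := by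
      simp [not_le]
    rw [he, Finset.card_filter_add_card_filter_not (s := S) (p := fun x => t ≤ x)]
  have h4 := hcnt t
  omega

lemma key {n : ℕ} (P : Fin n → Option Bool) :
    ∀ (l stk : List (Fin n)), l.Pairwise (· < ·) →
      (∀ a ∈ stk, ∀ b ∈ l, a < b) → stk.Nodup →
      (∀ a ∈ stk, P a = some true) →
      ∃ pr : List (Fin n × Fin n),
        pr.length = matchedPairsAux (l.filterMap P) stk.length ∧
        (∀ x ∈ pr, x.1 < x.2 ∧ P x.1 = some true ∧ P x.2 = some false ∧
          (x.1 ∈ stk ∨ x.1 ∈ l) ∧ x.2 ∈ l) ∧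
        (pr.map Prod.fst).Nodup ∧ (pr.map Prod.snd).Nodup := by
  intro l
  induction l with
  | nil =>
    intro stk _ _ _ _
    exact ⟨[], by simp [matchedPairsAux], by simp, by simp, by simp⟩
  | cons b rest ih =>
    intro stk hpw hlt hnd hP
    have hblt : ∀ c ∈ rest, b < c := fun c hc => (List.pairwise_cons.mp hpw).1 c hc
    have hltrest : ∀ a ∈ stk, ∀ c ∈ rest, a < c :=
      fun a ha c hc => hlt a ha c (List.mem_cons_of_mem _ hc)
    cases hPb : P b with
    | none =>
      obtain ⟨pr, h1, h2, h3, h4⟩ := ih stk hpw.of_cons hltrest hnd hP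
      refine ⟨pr, by simpa [List.filterMap_cons, hPb] using h1, fun x hx => ?_, h3, h4⟩
      obtain ⟨ha, hb, hc, hd, he⟩ := h2 x hx
      exact ⟨ha, hb, hc, hd.imp id (List.mem_cons_of_mem _), List.mem_cons_of_mem _ he⟩
    | some v =>
      cases v with
      | true =>
        have hnd' : (b :: stk).Nodup := by
          refine List.nodup_cons.2 ⟨fun hb' => ?_, hnd⟩
          exact absurd (hlt b hb' b (List.mem_cons_self)) (lt_irrefl b)
        have hlt' : ∀ a ∈ b :: stk, ∀ c ∈ rest, a < c := by
          intro a ha c hc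
          rcases List.mem_cons.1 ha with rfl | ha
          · exact hblt c hc
          · exact hltrest a ha c hc
        have hP' : ∀ a ∈ b :: stk, P a = some true := by
          intro a ha
          rcases List.mem_cons.1 ha with rfl | ha
          · exact hPb
          · exact hP a ha
        obtain ⟨pr, h1, h2, h3, h4⟩ := ih (b :: stk) hpw.of_cons hlt' hnd' hP'
        refine ⟨pr, by simpa [List.filterMap_cons, hPb, matchedPairsAux] using h1,
          fun x hx => ?_, h3, h4⟩
        obtain ⟨ha, hb', hc, hd, he⟩ := h2 x hx
        refine ⟨ha, hb', hc, ?_, List.mem_cons_of_mem _ he⟩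
        rcases hd with hd | hd
        · rcases List.mem_cons.1 hd with rfl | hd
          · exact Or.inr (List.mem_cons_self)
          · exact Or.inl hd
        · exact Or.inr (List.mem_cons_of_mem _ hd)
      | false =>
        cases stk with
        | nil =>
          obtain ⟨pr, h1, h2, h3, h4⟩ := ih [] hpw.of_cons (by simp) (by simp) (by simp)
          refine ⟨pr, by simpa [List.filterMap_cons, hPb, matchedPairsAux] using h1,
            fun x hx => ?_, h3, h4⟩
          obtain ⟨ha, hb', hc, hd, he⟩ := h2 x hx
          refine ⟨ha, hb', hc, ?_, List.mem_cons_of_mem _ he⟩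
          rcases hd with hd | hd
          · simp at hd
          · exact Or.inr (List.mem_cons_of_mem _ hd)
        | cons a s =>
          have hnd' : s.Nodup := (List.nodup_cons.1 hnd).2
          have has : a ∉ s := (List.nodup_cons.1 hnd).1
          obtain ⟨pr, h1, h2, h3, h4⟩ := ih s hpw.of_cons
            (fun x hx c hc => hltrest x (List.mem_cons_of_mem _ hx) c hc) hnd'
            (fun x hx => hP x (List.mem_cons_of_mem _ hx))
          have hab : a < b := hlt a (List.mem_cons_self) b (List.mem_cons_self)
          refine ⟨(a, b) :: pr, ?_, ?_, ?_, ?_⟩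
          · simp only [List.filterMap_cons, hPb, List.length_cons]
            rw [h1]
            simp [matchedPairsAux]
          · intro x hx
            rcases List.mem_cons.1 hx with rfl | hx
            · exact ⟨hab, hP a (List.mem_cons_self), hPb, Or.inl (List.mem_cons_self),
                List.mem_cons_self⟩
            · obtain ⟨ha', hb', hc, hd, he⟩ := h2 x hx
              refine ⟨ha', hb', hc, ?_, List.mem_cons_of_mem _ he⟩
              rcases hd with hd | hd
              · exact Or.inl (List.mem_cons_of_mem _ hd)
              · exact Or.inr (List.mem_cons_of_mem _ hd)
          · refine List.nodup_cons.2 ⟨?_, h3⟩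
            simp only [List.mem_map]
            rintro ⟨x, hx, hfx⟩
            obtain ⟨_, _, _, hd, _⟩ := h2 x hx
            rcases hd with hd | hd
            · exact has (hfx ▸ hd)
            · have := hltrest a (List.mem_cons_self) x.1 hd
              rw [hfx] at this; exact lt_irrefl a this
          · refine List.nodup_cons.2 ⟨?_, h4⟩
            simp only [List.mem_map]
            rintro ⟨x, hx, hfx⟩
            obtain ⟨_, _, _, _, he⟩ := h2 x hx
            have := hblt x.2 he
            rw [hfx] at this; exact lt_irrefl b this

lemma aux_card {n : ℕ} (pr : List (Fin n × Fin n)) (t : Fin n) (f : Fin n × Fin n → Fin n)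
    (h : (pr.map f).Nodup) :
    ((pr.map f).toFinset.filter fun x => t ≤ x).card = (pr.filter fun x => t ≤ f x).length := by
  have h1 : ((pr.map f).filter fun x => t ≤ x).toFinset =
      (pr.map f).toFinset.filter fun x => t ≤ x := by
    ext a; simp
  rw [← h1, List.toFinset_card_of_nodup (h.filter _), List.filter_map]
  rw [List.length_map]; rfl

lemma aux_le {n : ℕ} (pr : List (Fin n × Fin n)) (t : Fin n) (h : ∀ x ∈ pr, x.1 < x.2) :
    (pr.filter fun x => t ≤ x.1).length ≤ (pr.filter fun x => t ≤ x.2).length := by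
  rw [← List.countP_eq_length_filter, ← List.countP_eq_length_filter]
  apply List.countP_mono_left
  intro a ha hp
  simp only [decide_eq_true_eq] at *
  exact le_of_lt (lt_of_le_of_lt hp (h a ha))
/-- If `word_{j,I}(D)` has `p` paired `()`'s and `q` `⋆`'s, then there is a basis `B` of
`SM_n(D_j)` (i.e. `B ≤ D_j`) with `#(I ∩ B) = p + q`; in particular the rank of `I` in
`SM_n(D_j)` is at least `p + q`. -/
theorem stmt17 (n : ℕ) (D : Finset (Fin n × Fin n)) (j : Fin n) (I : Finset (Fin n))
    (p q : ℕ) (hp : p = matchedPairs (colWord D j I)) (hq : q = (colSet D j ∩ I).card) :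
    (∃ B : Finset (Fin n), DomLE B (colSet D j) ∧ (I ∩ B).card = p + q) ∧
      p + q ≤ smRank (colSet D j) I := by
  set S := colSet D j with hSdef
  set P : Fin n → Option Bool := fun i =>
    if (i, j) ∈ D then (if i ∈ I then none else some false)
    else (if i ∈ I then some true else none) with hPdef
  obtain ⟨pr, h1, h2, h3, h4⟩ := key P (List.finRange n) []
    (List.pairwise_lt_finRange n) (by simp) (by simp) (by simp)
  have hplen : pr.length = p := by rw [hp]; exact h1
  have hprop : ∀ x ∈ pr, x.1 < x.2 ∧ x.1 ∉ S ∧ x.1 ∈ I ∧ x.2 ∈ S ∧ x.2 ∉ I := by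
    intro x hx
    obtain ⟨ha, hb, hc, _, _⟩ := h2 x hx
    rw [hPdef] at hb hc
    simp only at hb hc
    have hb' : (x.1, j) ∉ D ∧ x.1 ∈ I := by
      by_cases hD1 : (x.1, j) ∈ D <;> by_cases hI1 : x.1 ∈ I <;>
        simp [hD1, hI1] at hb <;> exact ⟨hD1, hI1⟩
    have hc' : (x.2, j) ∈ D ∧ x.2 ∉ I := by
      by_cases hD1 : (x.2, j) ∈ D <;> by_cases hI1 : x.2 ∈ I <;>
        simp [hD1, hI1] at hc <;> exact ⟨hD1, hI1⟩
    refine ⟨ha, ?_, hb'.2, ?_, hc'.2⟩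
    · simp [hSdef, colSet, hb'.1]
    · simp [hSdef, colSet, hc'.1]
  set O : Finset (Fin n) := (pr.map Prod.fst).toFinset with hOdef
  set C : Finset (Fin n) := (pr.map Prod.snd).toFinset with hCdef
  have hOmem : ∀ a, a ∈ O ↔ ∃ x ∈ pr, x.1 = a := by intro a; simp [hOdef]
  have hCmem : ∀ a, a ∈ C ↔ ∃ x ∈ pr, x.2 = a := by intro a; simp [hCdef]
  have hOI : O ⊆ I := by
    intro a ha
    obtain ⟨x, hx, rfl⟩ := (hOmem a).1 ha
    exact (hprop x hx).2.2.1
  have hOS : ∀ a ∈ O, a ∉ S := by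
    intro a ha
    obtain ⟨x, hx, rfl⟩ := (hOmem a).1 ha
    exact (hprop x hx).2.1
  have hCS : C ⊆ S := by
    intro a ha
    obtain ⟨x, hx, rfl⟩ := (hCmem a).1 ha
    exact (hprop x hx).2.2.2.1
  have hCI : ∀ a ∈ C, a ∉ I := by
    intro a ha
    obtain ⟨x, hx, rfl⟩ := (hCmem a).1 ha
    exact (hprop x hx).2.2.2.2
  have hOcard : O.card = p := by
    rw [hOdef, List.toFinset_card_of_nodup h3, List.length_map, hplen]
  have hCcard : C.card = p := by
    rw [hCdef, List.toFinset_card_of_nodup h4, List.length_map, hplen]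
  set B : Finset (Fin n) := (S \ C) ∪ O with hBdef
  have hdisj : Disjoint (S \ C) O := by
    rw [Finset.disjoint_right]
    intro a ha
    simp only [Finset.mem_sdiff]
    intro hmem
    exact hOS a ha hmem.1
  have hpS : p ≤ S.card := by
    rw [← hCcard]; exact Finset.card_le_card hCS
  have hBcard : B.card = S.card := by
    rw [hBdef, Finset.card_union_of_disjoint hdisj, Finset.card_sdiff_of_subset hCS, hCcard, hOcard]
    omega
  have hcnt : ∀ t : Fin n, (B.filter fun x => t ≤ x).card ≤ (S.filter fun x => t ≤ x).card := by
    intro t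
    have hOf : (O.filter fun x => t ≤ x).card = (pr.filter fun x => t ≤ x.1).length :=
      aux_card pr t Prod.fst h3
    have hCf : (C.filter fun x => t ≤ x).card = (pr.filter fun x => t ≤ x.2).length :=
      aux_card pr t Prod.snd h4
    have hle : (pr.filter fun x => t ≤ x.1).length ≤ (pr.filter fun x => t ≤ x.2).length :=
      aux_le pr t (fun x hx => (hprop x hx).1)
    have hCfS : (C.filter fun x => t ≤ x) ⊆ (S.filter fun x => t ≤ x) :=
      Finset.filter_subset_filter _ hCS
    have hsd : ((S \ C).filter fun x => t ≤ x) =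
        (S.filter fun x => t ≤ x) \ (C.filter fun x => t ≤ x) := by
      ext a
      simp only [Finset.mem_filter, Finset.mem_sdiff]
      tauto
    have hBf : (B.filter fun x => t ≤ x) =
        ((S \ C).filter fun x => t ≤ x) ∪ (O.filter fun x => t ≤ x) := by
      rw [hBdef, Finset.filter_union]
    rw [hBf]
    calc (((S \ C).filter fun x => t ≤ x) ∪ (O.filter fun x => t ≤ x)).card
        ≤ ((S \ C).filter fun x => t ≤ x).card + (O.filter fun x => t ≤ x).card :=
          Finset.card_union_le _ _
      _ ≤ (S.filter fun x => t ≤ x).card := by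
          rw [hsd, Finset.card_sdiff_of_subset hCfS, hOf, hCf]
          have := Finset.card_le_card hCfS
          omega
  have hdom : DomLE B S := domLE_of_counts hBcard hcnt
  have hIB : (I ∩ B).card = p + q := by
    have e1 : I ∩ B = (I ∩ S) ∪ O := by
      rw [hBdef, Finset.inter_union_distrib_left]
      congr 1
      · ext a
        simp only [Finset.mem_inter, Finset.mem_sdiff]
        constructor
        · rintro ⟨h1', h2', _⟩; exact ⟨h1', h2'⟩
        · rintro ⟨h1', h2'⟩; exact ⟨h1', h2', fun hc => hCI a hc h1'⟩
      · exact Finset.inter_eq_right.mpr hOI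
    have e2 : Disjoint (I ∩ S) O := by
      rw [Finset.disjoint_right]
      intro a ha hmem
      exact hOS a ha (Finset.mem_inter.1 hmem).2
    rw [e1, Finset.card_union_of_disjoint e2, hOcard, Finset.inter_comm]
    omega
  refine ⟨⟨B, hdom, hIB⟩, ?_⟩
  rw [← hIB]
  unfold smRank
  letI := Classical.decPred fun B' : Finset (Fin n) => DomLE B' S
  exact Finset.le_sup (f := fun B' => (I ∩ B').card)
    (Finset.mem_filter.2 ⟨Finset.mem_univ B, hdom⟩)
end
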